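/- arXiv:2109.13932 — 7 statements merged into one kernel-verified Lean document; each statement's English description precedes it below -/
import Mathlib

section
/- Let μ ∈ ℂ with Re(μ) ≥ 0 and let α < 1. Then for all sufficiently small ε > 0, both roots of the quadratic λ² + (μ + 1 + ε - α)λ + ε(μ + 2 - α) = 0 have strictly negative real part. -/
open Complex

/-- Spectral core of Theorem 1: if `Re μ ≥ 0` and `α < 1`, then for all
sufficiently small `ε > 0` both roots of
`λ² + (μ + 1 + ε - α)λ + ε(μ + 2 - α) = 0` have strictly negative real part. -/
theorem stmt_6 (μ : ℂ) (hμ : 0 ≤ μ.re) (α : ℝ) (hα : α < 1) :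
    ∃ ε₀ > 0, ∀ ε : ℝ, 0 < ε → ε < ε₀ →
      ∀ lam : ℂ,
        lam ^ 2 + (μ + 1 + (ε : ℂ) - (α : ℂ)) * lam + (ε : ℂ) * (μ + 2 - (α : ℂ)) = 0 →
        lam.re < 0 := by
  set N : ℝ := ‖μ + 2 - (α : ℂ)‖ with hN
  have h1α : (0:ℝ) < 1 - α := by linarith
  have h2α : (0:ℝ) < 2 - α := by linarith
  have hNpos : 0 < N ^ 2 + 1 := by positivity
  refine ⟨(1 - α) ^ 2 * (2 - α) / (N ^ 2 + 1), by positivity, ?_⟩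
  intro ε hε hε₀ lam hroot
  by_contra hcon
  push_neg at hcon
  set b : ℂ := μ + 1 + (ε : ℂ) - (α : ℂ) with hb
  set c : ℂ := (ε : ℂ) * (μ + 2 - (α : ℂ)) with hc
  have heq : lam * (lam + b) = -c := by
    have : lam ^ 2 + b * lam + c = 0 := hroot
    linear_combination this
  -- real part of lam + b is at least 1 - α
  have hbre : 1 - α ≤ (lam + b).re := by
    simp only [hb, Complex.add_re, Complex.sub_re, Complex.ofReal_re, Complex.one_re]
    linarith
  have habs : 1 - α ≤ ‖lam + b‖ :=
    le_trans hbre ((abs_le.mp (Complex.abs_re_le_norm _)).2)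
  -- |c| = ε N
  have hcabs : ‖c‖ = ε * N := by
    rw [hc, norm_mul, Complex.norm_real, Real.norm_eq_abs, abs_of_pos hε]
  -- |lam| bound
  have hmul : ‖lam‖ * ‖lam + b‖ = ε * N := by
    rw [← norm_mul, heq, norm_neg, hcabs]
  have hlamabs : ‖lam‖ * (1 - α) ≤ ε * N := by
    calc ‖lam‖ * (1 - α) ≤ ‖lam‖ * ‖lam + b‖ := by
          exact mul_le_mul_of_nonneg_left habs (norm_nonneg _)
      _ = ε * N := hmul
  -- key identity: lam.re * |lam+b|² = (-c * conj (lam+b)).re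
  have hkey : lam.re * Complex.normSq (lam + b) = (-c * (starRingEnd ℂ) (lam + b)).re := by
    have h := congrArg (fun z => (z * (starRingEnd ℂ) (lam + b)).re) heq
    rw [← h]
    rw [mul_assoc, Complex.mul_conj]
    simp [Complex.mul_re]
  -- lower bound on (c * conj b).re
  have hcb : ε * ((1 - α) * (2 - α)) ≤ (c * (starRingEnd ℂ) b).re := by
    simp only [hc, hb, Complex.mul_re, Complex.conj_re, Complex.conj_im,
      Complex.add_re, Complex.add_im, Complex.sub_re, Complex.sub_im,
      Complex.one_re, Complex.one_im, Complex.ofReal_re, Complex.ofReal_im,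
      Complex.mul_im, Complex.re_ofNat, Complex.im_ofNat]
    ring_nf
    nlinarith [sq_nonneg μ.im, sq_nonneg μ.re, mul_pos hε h1α]
  -- lower bound on (c * conj lam).re
  have hcl : -(ε * N * (ε * N / (1 - α))) ≤ (c * (starRingEnd ℂ) lam).re := by
    have h1 : -‖c * (starRingEnd ℂ) lam‖ ≤ (c * (starRingEnd ℂ) lam).re :=
      (abs_le.mp (Complex.abs_re_le_norm _)).1
    have h2 : ‖c * (starRingEnd ℂ) lam‖ = ε * N * ‖lam‖ := by
      rw [norm_mul, hcabs, Complex.norm_conj]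
    have h3 : ‖lam‖ ≤ ε * N / (1 - α) := by
      rw [le_div_iff₀ h1α]; exact hlamabs
    have h4 : ε * N * ‖lam‖ ≤ ε * N * (ε * N / (1 - α)) := by
      apply mul_le_mul_of_nonneg_left h3
      positivity
    linarith [h1, h2 ▸ h1]
  -- combine
  have hsplit : (-c * (starRingEnd ℂ) (lam + b)).re
      = -((c * (starRingEnd ℂ) lam).re + (c * (starRingEnd ℂ) b).re) := by
    rw [show -c * (starRingEnd ℂ) (lam + b)
        = -(c * (starRingEnd ℂ) lam + c * (starRingEnd ℂ) b) by
      rw [map_add]; ring]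
    simp
  have hεN : ε * N * (ε * N / (1 - α)) < ε * ((1 - α) * (2 - α)) := by
    have hε₀' : ε * (N ^ 2 + 1) < (1 - α) ^ 2 * (2 - α) :=
      (lt_div_iff₀ hNpos).mp hε₀
    have hN0 : 0 ≤ N := norm_nonneg _
    have hkey2 : ε * N ^ 2 < (1 - α) ^ 2 * (2 - α) := by nlinarith
    have hre : ε * N * (ε * N / (1 - α)) = ε * ε * N ^ 2 / (1 - α) := by ring
    rw [hre, div_lt_iff₀ h1α]
    nlinarith [mul_pos hε hε, sq_nonneg N]
  have hneg : lam.re * Complex.normSq (lam + b) < 0 := by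
    rw [hkey, hsplit]
    have := hcb
    have := hcl
    nlinarith
  have hns : 0 < Complex.normSq (lam + b) := by
    have : lam + b ≠ 0 := by
      intro h0
      rw [h0] at hbre
      simp at hbre
      linarith
    exact Complex.normSq_pos.mpr this
  nlinarith [mul_nonneg hcon hns.le]
end

section
/- Let A be a non-negative N×N matrix with zero diagonal, α < 1, ε > 0 sufficiently small, and D⁻ the diagonal matrix of row sums of A. Then the origin of the linear system ẋ = ((α-1)I - D⁻ + A)x - y, ẏ = ε(x - y) is exponentially stable, i.e., all eigenvalues of the corresponding 2N×2N matrix have negative real part. -/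
open Matrix Complex

/-- Theorem 1: the origin of the diffusively coupled network of damped
oscillators is locally exponentially stable for sufficiently small `ε > 0`:
all eigenvalues of `[[(α-1)I - D⁻ + A, -I],[εI, -εI]]` have negative real part. -/
theorem stmt_7 (N : ℕ) (A : Matrix (Fin N) (Fin N) ℝ)
    (hA : ∀ i j, 0 ≤ A i j) (hdiag : ∀ i, A i i = 0)
    (α : ℝ) (hα : α < 1) :
    ∃ ε₀ > 0, ∀ ε : ℝ, 0 < ε → ε < ε₀ →
      ∀ lam : ℂ,
        ((Matrix.fromBlocks
            (((α : ℂ) - 1) • (1 : Matrix (Fin N) (Fin N) ℂ)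
              - (Matrix.diagonal (fun i => ∑ j, A i j)).map Complex.ofReal
              + A.map Complex.ofReal)
            (-(1 : Matrix (Fin N) (Fin N) ℂ))
            ((ε : ℂ) • (1 : Matrix (Fin N) (Fin N) ℂ))
            (-((ε : ℂ) • (1 : Matrix (Fin N) (Fin N) ℂ)))
          - lam • (1 : Matrix ((Fin N) ⊕ (Fin N)) ((Fin N) ⊕ (Fin N)) ℂ)).det = 0) →
        lam.re < 0 := by
  refine ⟨1, one_pos, fun ε hε hε1 lam hdet => ?_⟩
  by_contra hre
  push_neg at hre
  obtain ⟨v, hv0, hv⟩ := Matrix.exists_mulVec_eq_zero_iff.mpr hdet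
  set x : Fin N → ℂ := fun i => v (Sum.inl i) with hxdef
  set y : Fin N → ℂ := fun i => v (Sum.inr i) with hydef
  have h2 : ∀ i, (ε : ℂ) * x i - ((ε : ℂ) + lam) * y i = 0 := by
    intro i
    have := congrFun hv (Sum.inr i)
    simp [Matrix.mulVec, dotProduct, Fintype.sum_sum_type, Matrix.sub_apply,
      Matrix.smul_apply, Matrix.one_apply, Matrix.neg_apply, Matrix.fromBlocks,
      Sum.elim_inl, Sum.elim_inr, mul_ite, ite_mul, sub_mul, neg_mul,
      Finset.sum_sub_distrib, Finset.sum_ite_eq, Finset.sum_ite_eq'] at this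
    linear_combination this
  have h1 : ∀ i, (((α:ℂ) - 1) - (∑ j, (A i j : ℂ)) - lam) * x i
      + (∑ j, (A i j : ℂ) * x j) - y i = 0 := by
    intro i
    have := congrFun hv (Sum.inl i)
    simp [Matrix.mulVec, dotProduct, Fintype.sum_sum_type, Matrix.sub_apply,
      Matrix.smul_apply, Matrix.one_apply, Matrix.neg_apply, Matrix.add_apply,
      Matrix.map_apply, Matrix.diagonal_apply, Matrix.fromBlocks,
      Sum.elim_inl, Sum.elim_inr, mul_ite, ite_mul, sub_mul, add_mul, neg_mul,
      Finset.sum_sub_distrib, Finset.sum_add_distrib,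
      Finset.sum_ite_eq, Finset.sum_ite_eq'] at this
    linear_combination this
  -- ℓ = lam + ε has positive real part, hence is nonzero
  set ℓ : ℂ := (ε : ℂ) + lam with hℓdef
  have hℓre : 0 < ℓ.re := by
    simp only [hℓdef, Complex.add_re, Complex.ofReal_re]
    linarith
  have hℓ0 : ℓ ≠ 0 := fun h => by simp [h] at hℓre
  -- solve for y
  have hy : ∀ i, y i = ((ε : ℂ) / ℓ) * x i := by
    intro i
    rw [div_mul_eq_mul_div, eq_div_iff hℓ0]
    linear_combination -(h2 i)
  -- x is nonzero
  have hx0 : ∃ j, x j ≠ 0 := by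
    by_contra h
    push_neg at h
    apply hv0
    funext z
    cases z with
    | inl i => exact h i
    | inr i => simpa [h i] using hy i
  obtain ⟨j, hj⟩ := hx0
  -- pick the index with maximal |x i|
  obtain ⟨i₀, -, hmax⟩ := Finset.exists_max_image Finset.univ
    (fun i => ‖x i‖) ⟨j, Finset.mem_univ j⟩
  have hxi0 : 0 < ‖x i₀‖ :=
    lt_of_lt_of_le (by simpa using hj) (hmax j (Finset.mem_univ j))
  -- the Gershgorin-type quantity
  set dR : ℝ := ∑ k, A i₀ k with hdR
  set c : ℂ := lam + (ε : ℂ) / ℓ - ((α : ℂ) - 1) + (dR : ℂ) with hc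
  have hkey : (∑ k, (A i₀ k : ℂ) * x k) = c * x i₀ := by
    have h := h1 i₀
    rw [hy i₀] at h
    have hdcast : (∑ k, (A i₀ k : ℂ)) = ((dR : ℝ) : ℂ) := by push_cast [hdR]; ring
    rw [hdcast] at h
    linear_combination h
  -- bound |c| by dR
  have habs : ‖c‖ ≤ dR := by
    have h1' : ‖∑ k, (A i₀ k : ℂ) * x k‖ ≤ dR * ‖x i₀‖ := by
      calc ‖∑ k, (A i₀ k : ℂ) * x k‖
          ≤ ∑ k, ‖(A i₀ k : ℂ) * x k‖ := norm_sum_le _ _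
        _ ≤ ∑ k, A i₀ k * ‖x i₀‖ := by
            apply Finset.sum_le_sum
            intro k _
            rw [norm_mul, Complex.norm_real, Real.norm_eq_abs, _root_.abs_of_nonneg (hA i₀ k)]
            exact mul_le_mul_of_nonneg_left (hmax k (Finset.mem_univ k)) (hA i₀ k)
        _ = dR * ‖x i₀‖ := by rw [hdR, Finset.sum_mul]
    have h2' : ‖c‖ * ‖x i₀‖ ≤ dR * ‖x i₀‖ := by
      rw [← norm_mul, ← hkey]; exact h1'
    exact le_of_mul_le_mul_right h2' hxi0
  -- real part of c
  have hcre : c.re = lam.re + ((ε : ℂ) / ℓ).re - (α - 1) + dR := by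
    simp [hc, Complex.add_re, Complex.sub_re, Complex.ofReal_re, Complex.one_re]
  have hdivre : 0 ≤ ((ε : ℂ) / ℓ).re := by
    rw [Complex.div_re]
    have h1 : (0:ℝ) ≤ (ε : ℂ).re * ℓ.re / Complex.normSq ℓ := by
      apply div_nonneg _ (Complex.normSq_nonneg ℓ)
      simp only [Complex.ofReal_re]
      positivity
    have h2 : (0:ℝ) ≤ (ε : ℂ).im * ℓ.im / Complex.normSq ℓ := by
      simp [Complex.ofReal_im]
    linarith
  have hfin : c.re ≤ dR := le_trans (Complex.re_le_norm c) habs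
  rw [hcre] at hfin
  linarith
end

section
/- Let μ ∈ ℂ with Re(μ) < ρ and |μ| ≤ ρ, where ρ = 1 + ε - α with α ∈ [0,1). Then for sufficiently small ε > 0, both roots of λ² + (1 + ε - α - μ)λ + (2 - α - μ)ε = 0 have strictly negative real part. -/
open Complex

/-- Stability of non-dominant modes at the excitatory Hopf bifurcation:
if `μ ∈ ℂ` satisfies `Re μ < ρ` and `|μ| ≤ ρ` where `ρ = 1 + ε - α`,
`α ∈ [0,1)`, then for sufficiently small `ε > 0` both roots of
`λ² + (1+ε-α-μ)λ + (2-α-μ)ε = 0` have strictly negative real part. -/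
theorem stmt_11 (μ : ℂ) (α : ℝ) (hα0 : 0 ≤ α) (hα1 : α < 1) :
    ∃ ε₀ > 0, ∀ ε : ℝ, 0 < ε → ε < ε₀ →
      μ.re < 1 + ε - α → ‖μ‖ ≤ 1 + ε - α →
      ∀ lam : ℂ,
        lam ^ 2 + (1 + (ε : ℂ) - (α : ℂ) - μ) * lam + (2 - (α : ℂ) - μ) * (ε : ℂ) = 0 →
        lam.re < 0 := by
  rcases le_or_gt μ.re (1 - α) with hle | hgt
  · -- Main case: Re μ ≤ 1 - α.  Then ε₀ = 1 works.
    refine ⟨1, one_pos, ?_⟩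
    intro ε hε hε1 _ _ lam heq
    by_contra hx
    push_neg at hx
    rw [Complex.ext_iff] at heq
    obtain ⟨h1, h2⟩ := heq
    simp [pow_two, Complex.add_re, Complex.add_im, Complex.sub_re, Complex.sub_im,
      Complex.mul_re, Complex.mul_im, Complex.one_re, Complex.one_im,
      Complex.ofReal_re, Complex.ofReal_im] at h1 h2
    set x := lam.re with hxdef
    set y := lam.im with hydef
    set m := μ.re with hmdef
    set n := μ.im with hndef
    -- p := 1 + ε - α - m > 0
    have hp : 0 < 1 + ε - α - m := by linarith
    have hD : 0 < 2 * x + (1 + ε - α - m) := by linarith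
    have key : (x ^ 2 + (1 + ε - α - m) * x + ε * (1 + ε - α - m) + ε - ε ^ 2) *
          (2 * x + (1 + ε - α - m)) ^ 2 +
          n ^ 2 * (x + ε) * (x + (1 + ε - α - m) - ε) = 0 := by
      linear_combination (2 * x + (1 + ε - α - m)) ^ 2 * h1 +
        (y * (2 * x + (1 + ε - α - m)) + n * (x + ε) - n * (2 * x + (1 + ε - α - m))) * h2
    have hf1 : 0 < x ^ 2 + (1 + ε - α - m) * x + ε * (1 + ε - α - m) + ε - ε ^ 2 := by
      nlinarith
    have hD2 : 0 < (2 * x + (1 + ε - α - m)) ^ 2 := by positivity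
    have hq : 0 ≤ n ^ 2 * (x + ε) * (x + (1 + ε - α - m) - ε) := by
      apply mul_nonneg (mul_nonneg (sq_nonneg n) (by linarith)) (by linarith)
    nlinarith [mul_pos hf1 hD2]
  · -- Vacuous case: Re μ > 1 - α, so for small ε the bound |μ| ≤ 1 + ε - α fails.
    refine ⟨μ.re - (1 - α), by linarith, ?_⟩
    intro ε hε hε1 _ habs lam _
    have := Complex.re_le_norm μ
    linarith
end

section
/- Let A be an irreducible non-negative matrix with A𝟙 = d⁻𝟙, α ∈ [0,1), β = (1+ε-α)/d⁻, and ε > 0 sufficiently small. Then the 2N×2N Jacobian J = [[-(1-α)I + βA, -I],[εI, -εI]] has exactly two eigenvalues (counted with multiplicity) on the imaginary axis, namely ±i√(ε(1-ε)), and all remaining 2N-2 eigenvalues have strictly negative real part. -/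
open Matrix Complex Polynomial

/-- An irreducible matrix (strong connectivity of the associated digraph). -/
def MatrixIsIrreducible {N : ℕ} (A : Matrix (Fin N) (Fin N) ℝ) : Prop :=
  ∀ i j, ∃ m : ℕ, 0 < m ∧ (A ^ m) i j ≠ 0

namespace Stmt13Aux


variable {n : Type*} [Fintype n] [DecidableEq n]

lemma eval_charpoly' {R : Type*} [CommRing R] (M : Matrix n n R) (z : R) :
    M.charpoly.eval z = (z • (1 : Matrix n n R) - M).det := by
  rw [Matrix.charpoly, ← Polynomial.coe_evalRingHom, RingHom.map_det]
  congr 1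
  ext i j
  rcases eq_or_ne i j with rfl | h
  · simp [Matrix.charmatrix_apply, Matrix.one_apply, Matrix.diagonal_apply]
  · simp [Matrix.charmatrix_apply, Matrix.one_apply, Matrix.diagonal_apply, h]

lemma det_smul_one_sub_smul (B : Matrix n n ℂ) (w c : ℂ) :
    (w • (1 : Matrix n n ℂ) - c • B).det
      = (B.charpoly.roots.map (fun μ => w - c * μ)).prod := by
  have hcard : Multiset.card B.charpoly.roots = Fintype.card n := by
    rw [splits_iff_card_roots.mp (IsAlgClosed.splits B.charpoly),
      Matrix.charpoly_natDegree_eq_dim]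
  rcases eq_or_ne c 0 with rfl | hc
  · have : (B.charpoly.roots.map (fun μ => w - 0 * μ)) =
        Multiset.replicate (Fintype.card n) w := by
      rw [← hcard, ← Multiset.map_const']
      apply Multiset.map_congr rfl
      intro μ _
      ring
    rw [this, Multiset.prod_replicate]
    simp [Matrix.det_smul]
  · have hB : B.charpoly = (B.charpoly.roots.map (fun μ => X - C μ)).prod :=
      (IsAlgClosed.splits _).eq_prod_roots_of_monic B.charpoly_monic
    have h1 : w • (1 : Matrix n n ℂ) - c • B = c • ((c⁻¹ * w) • (1 : Matrix n n ℂ) - B) := by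
      rw [smul_sub, smul_smul, ← mul_assoc, mul_inv_cancel₀ hc, one_mul]
    rw [h1, Matrix.det_smul, ← eval_charpoly', ]
    nth_rewrite 1 [hB]
    rw [eval_multiset_prod, Multiset.map_map]
    have h2 : ∀ f : ℂ → ℂ, (B.charpoly.roots.map (fun μ => c * f μ)).prod
        = c ^ Fintype.card n * (B.charpoly.roots.map f).prod := by
      intro f
      rw [← hcard]
      calc (B.charpoly.roots.map (fun μ => c * f μ)).prod
          = ((B.charpoly.roots.map (fun _ => c)).prod) * (B.charpoly.roots.map f).prod := by
            rw [← Multiset.prod_map_mul]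
        _ = c ^ Multiset.card B.charpoly.roots * (B.charpoly.roots.map f).prod := by
            rw [Multiset.map_const', Multiset.prod_replicate]
    rw [← h2]
    congr 1
    apply Multiset.map_congr rfl
    intro μ _
    simp only [Function.comp_apply, eval_sub, eval_X, eval_C]
    field_simp



lemma quad_root_re_neg {c ε : ℝ} (hc : 0 < c) (hε : 0 < ε) (hε1 : ε ≤ 1) (hε2 : ε ≤ c / 4)
    (hε3 : ε ≤ c ^ 2 / 64) {m l1 l2 : ℂ} (hm3 : ‖m‖ ≤ 3) (hmre : m.re ≤ ε - c)
    (hsum : l1 + l2 = m - (ε : ℂ)) (hprod : l1 * l2 = (ε : ℂ) * (1 - m)) : l1.re < 0 := by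
  by_contra hcon
  push_neg at hcon
  have hre_sum : l1.re + l2.re = m.re - ε := by
    have := congrArg Complex.re hsum
    simpa using this
  have hre2 : l2.re ≤ -c := by linarith
  have habs2 : c ≤ ‖l2‖ := by
    calc c ≤ -l2.re := by linarith
    _ ≤ |l2.re| := neg_le_abs _
    _ ≤ ‖l2‖ := Complex.abs_re_le_norm l2
  have h1m : ‖1 - m‖ ≤ 4 := by
    calc ‖1 - m‖ ≤ ‖(1 : ℂ)‖ + ‖-m‖ := by
          simpa [sub_eq_add_neg] using norm_add_le 1 (-m)
    _ ≤ 4 := by rw [norm_one, norm_neg]; linarith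
  have habs1 : ‖l1‖ * c ≤ 4 * ε := by
    have h0 : ‖l1‖ * ‖l2‖ = ε * ‖1 - m‖ := by
      rw [← norm_mul, hprod, norm_mul, Complex.norm_real, Real.norm_eq_abs, abs_of_pos hε]
    nlinarith [norm_nonneg l1, norm_nonneg (1 - m)]
  have habs1' : ‖l1‖ ≤ 4 * ε / c := by
    rw [le_div_iff₀ hc]; exact habs1
  have hl2 : l2 = m - (ε : ℂ) - l1 := by linear_combination hsum
  have key : l1.re * Complex.normSq l2 = ε * ((1 - m) * (starRingEnd ℂ) l2).re := by
    have h0 : l1 * ((Complex.normSq l2 : ℝ) : ℂ) = (ε : ℂ) * ((1 - m) * (starRingEnd ℂ) l2) := by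
      rw [← Complex.mul_conj l2, ← mul_assoc, hprod]; ring
    have h1 := congrArg Complex.re h0
    simpa [Complex.mul_re, Complex.ofReal_re, Complex.ofReal_im] using h1
  have hconj : (starRingEnd ℂ) l2 = (starRingEnd ℂ) m - (ε : ℂ) - (starRingEnd ℂ) l1 := by
    rw [hl2]; simp [map_sub, Complex.conj_ofReal]
  have hsplit : ((1 - m) * (starRingEnd ℂ) l2).re
      = ((1 - m) * ((starRingEnd ℂ) m - (ε : ℂ))).re - ((1 - m) * (starRingEnd ℂ) l1).re := by
    rw [hconj, show (1 - m) * ((starRingEnd ℂ) m - (ε : ℂ) - (starRingEnd ℂ) l1)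
      = (1 - m) * ((starRingEnd ℂ) m - (ε : ℂ)) - (1 - m) * (starRingEnd ℂ) l1 by ring,
      Complex.sub_re]
  have hboundA : ((1 - m) * ((starRingEnd ℂ) m - (ε : ℂ))).re ≤ ε ^ 2 - c := by
    have : ((1 - m) * ((starRingEnd ℂ) m - (ε : ℂ))).re
        = (1 - m.re) * (m.re - ε) - m.im * m.im := by
      simp [Complex.mul_re, Complex.sub_re, Complex.sub_im]
      try ring
    rw [this]
    nlinarith [sq_nonneg m.re, sq_nonneg m.im]
  have hboundB : -(((1 - m) * (starRingEnd ℂ) l1).re) ≤ 4 * (4 * ε / c) := by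
    have h2 : |((1 - m) * (starRingEnd ℂ) l1).re| ≤ ‖(1 - m) * (starRingEnd ℂ) l1‖ :=
      Complex.abs_re_le_norm _
    have h3 : ‖(1 - m) * (starRingEnd ℂ) l1‖ ≤ 4 * (4 * ε / c) := by
      rw [norm_mul, Complex.norm_conj]
      have := norm_nonneg l1
      nlinarith
    nlinarith [neg_le_abs (((1 - m) * (starRingEnd ℂ) l1).re)]
  have hc4 : 16 * ε / c ≤ c / 4 := by
    rw [div_le_div_iff₀ hc (by norm_num : (0:ℝ) < 4)]
    nlinarith
  have hnegrhs : ((1 - m) * (starRingEnd ℂ) l2).re ≤ -c / 2 := by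
    have hε₂ : ε ^ 2 ≤ c / 4 := by nlinarith
    rw [hsplit]
    have : 4 * (4 * ε / c) = 16 * ε / c := by ring
    linarith [hboundA, hboundB, hc4, this ▸ hboundB]
  have hL : 0 ≤ l1.re * Complex.normSq l2 :=
    mul_nonneg hcon (Complex.normSq_nonneg l2)
  nlinarith [key, hnegrhs, hL]

lemma pow_entry_nonneg {N : ℕ} (A : Matrix (Fin N) (Fin N) ℝ) (hA : ∀ i j, 0 ≤ A i j) :
    ∀ m i j, 0 ≤ (A ^ m) i j := by
  intro m
  induction m with
  | zero =>
    intro i j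
    rcases eq_or_ne i j with rfl | h
    · simp
    · simp [pow_zero, Matrix.one_apply, h]
  | succ k ih =>
    intro i j
    rw [pow_succ, Matrix.mul_apply]
    exact Finset.sum_nonneg fun l _ => mul_nonneg (ih i l) (hA l j)

lemma mulVec_pow_eig {n : Type*} [Fintype n] [DecidableEq n] {K : Type*} [Field K]
    (B : Matrix n n K) (x : n → K) (t : K) (h : B.mulVec x = t • x) (m : ℕ) :
    (B ^ m).mulVec x = t ^ m • x := by
  induction m with
  | zero => simp
  | succ k ih =>
    rw [pow_succ', ← Matrix.mulVec_mulVec, ih, Matrix.mulVec_smul, h, smul_smul, ← pow_succ]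

variable {N : ℕ}

lemma mulVec_ones (A : Matrix (Fin N) (Fin N) ℝ) (d : ℝ) (hreg : ∀ i, ∑ j, A i j = d) :
    A.mulVec (fun _ => (1 : ℝ)) = d • (fun _ => (1 : ℝ)) := by
  funext i
  simp [Matrix.mulVec, dotProduct, hreg i]

lemma eig_const (hN : 0 < N) (A : Matrix (Fin N) (Fin N) ℝ) (hA : ∀ i j, 0 ≤ A i j)
    (hirr : MatrixIsIrreducible A) (d : ℝ) (hd : 0 < d) (hreg : ∀ i, ∑ j, A i j = d)
    (x : Fin N → ℝ) (hx : A.mulVec x = d • x) : ∀ j, x j = x ⟨0, hN⟩ := by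
  haveI : Nonempty (Fin N) := ⟨⟨0, hN⟩⟩
  obtain ⟨i₀, -, hi₀⟩ := Finset.exists_min_image Finset.univ x ⟨⟨0, hN⟩, Finset.mem_univ _⟩
  set y : Fin N → ℝ := fun j => x j - x i₀ with hy_def
  have hy : A.mulVec y = d • y := by
    have h1 : y = x - (x i₀) • (fun _ => (1 : ℝ)) := by
      funext j; simp [hy_def, smul_eq_mul]
    rw [h1, Matrix.mulVec_sub, Matrix.mulVec_smul, hx, mulVec_ones A d hreg]
    funext j
    simp [smul_eq_mul]
    ring
  have hy0 : ∀ j, 0 ≤ y j := fun j => sub_nonneg.mpr (hi₀ j (Finset.mem_univ j))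
  have hyzero : ∀ j, y j = 0 := by
    intro j
    obtain ⟨m, -, hmne⟩ := hirr i₀ j
    have hpow := mulVec_pow_eig A y d hy m
    have h0 : ((A ^ m).mulVec y) i₀ = 0 := by
      rw [hpow]
      simp [hy_def, smul_eq_mul]
    rw [Matrix.mulVec, dotProduct] at h0
    have hterm := (Finset.sum_eq_zero_iff_of_nonneg (fun l _ =>
      mul_nonneg (pow_entry_nonneg A hA m i₀ l) (hy0 l))).mp h0 j (Finset.mem_univ j)
    rcases mul_eq_zero.mp hterm with h | h
    · exact absurd h hmne
    · exact h
  intro j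
  have h1 := hyzero j
  have h2 := hyzero ⟨0, hN⟩
  simp [hy_def] at h1 h2
  linarith

lemma eig_const_c (hN : 0 < N) (A : Matrix (Fin N) (Fin N) ℝ) (hA : ∀ i j, 0 ≤ A i j)
    (hirr : MatrixIsIrreducible A) (d : ℝ) (hd : 0 < d) (hreg : ∀ i, ∑ j, A i j = d)
    (v : Fin N → ℂ) (hv : (A.map Complex.ofReal).mulVec v = (d : ℂ) • v) :
    ∃ k : ℂ, v = fun _ => k := by
  have hcomp : ∀ i, ∑ j, (A i j : ℂ) * v j = (d : ℂ) * v i := by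
    intro i
    have := congrFun hv i
    simpa [Matrix.mulVec, dotProduct, Matrix.map_apply] using this
  have hre : A.mulVec (fun i => (v i).re) = d • (fun i => (v i).re) := by
    funext i
    have h2 := congrArg Complex.re (hcomp i)
    rw [Complex.re_sum] at h2
    simp only [Complex.mul_re, Complex.ofReal_re, Complex.ofReal_im, zero_mul, sub_zero] at h2
    simpa [Matrix.mulVec, dotProduct] using h2
  have him : A.mulVec (fun i => (v i).im) = d • (fun i => (v i).im) := by
    funext i
    have h2 := congrArg Complex.im (hcomp i)
    rw [Complex.im_sum] at h2
    simp only [Complex.mul_im, Complex.ofReal_re, Complex.ofReal_im, zero_mul, add_zero] at h2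
    simpa [Matrix.mulVec, dotProduct] using h2
  have h1 := eig_const hN A hA hirr d hd hreg _ hre
  have h2 := eig_const hN A hA hirr d hd hreg _ him
  refine ⟨v ⟨0, hN⟩, funext fun j => ?_⟩
  apply Complex.ext
  · exact h1 j
  · exact h2 j

lemma left_eig (hN : 0 < N) (A : Matrix (Fin N) (Fin N) ℝ) (hA : ∀ i j, 0 ≤ A i j)
    (hirr : MatrixIsIrreducible A) (d : ℝ) (hd : 0 < d) (hreg : ∀ i, ∑ j, A i j = d) :
    ∃ w : Fin N → ℝ, (∀ i, 0 < w i) ∧ Aᵀ.mulVec w = d • w := by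
  haveI : Nonempty (Fin N) := ⟨⟨0, hN⟩⟩
  have hones : (fun _ => (1 : ℝ)) ≠ (0 : Fin N → ℝ) := by
    intro h
    have := congrFun h ⟨0, hN⟩
    simp at this
  have hdet : (d • (1 : Matrix (Fin N) (Fin N) ℝ) - A).det = 0 := by
    rw [← Matrix.exists_mulVec_eq_zero_iff]
    refine ⟨fun _ => (1 : ℝ), hones, ?_⟩
    rw [Matrix.sub_mulVec, Matrix.smul_mulVec, Matrix.one_mulVec,
      mulVec_ones A d hreg, sub_self]
  have hdetT : (d • (1 : Matrix (Fin N) (Fin N) ℝ) - Aᵀ).det = 0 := by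
    have : d • (1 : Matrix (Fin N) (Fin N) ℝ) - Aᵀ = (d • 1 - A)ᵀ := by
      rw [Matrix.transpose_sub, Matrix.transpose_smul, Matrix.transpose_one]
    rw [this, Matrix.det_transpose]
    exact hdet
  obtain ⟨y, hyne, hy0⟩ := Matrix.exists_mulVec_eq_zero_iff.mpr hdetT
  have hy : Aᵀ.mulVec y = d • y := by
    have h1 := hy0
    rw [Matrix.sub_mulVec, Matrix.smul_mulVec, Matrix.one_mulVec, sub_eq_zero] at h1
    exact h1.symm
  set w : Fin N → ℝ := fun i => |y i| with hw_def
  have hge : ∀ j, d * w j ≤ (Aᵀ.mulVec w) j := by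
    intro j
    have h1 : d * w j = |(Aᵀ.mulVec y) j| := by
      rw [hy]
      simp [hw_def, abs_mul, abs_of_pos hd, smul_eq_mul]
    rw [h1, Matrix.mulVec, dotProduct]
    calc |∑ i, Aᵀ j i * y i| ≤ ∑ i, |Aᵀ j i * y i| := Finset.abs_sum_le_sum_abs _ _
      _ = ∑ i, Aᵀ j i * w i := by
          apply Finset.sum_congr rfl
          intro i _
          simp [Matrix.transpose_apply, abs_mul, _root_.abs_of_nonneg (hA i j), hw_def]
      _ = (Aᵀ.mulVec w) j := by rw [Matrix.mulVec, dotProduct]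
  have hsum : ∑ j, ((Aᵀ.mulVec w) j - d * w j) = 0 := by
    have h1 : ∑ j, (Aᵀ.mulVec w) j = ∑ i, d * w i := by
      calc ∑ j, (Aᵀ.mulVec w) j = ∑ j, ∑ i, A i j * w i := by
            apply Finset.sum_congr rfl
            intro j _
            rw [Matrix.mulVec, dotProduct]
            rfl
        _ = ∑ i, ∑ j, A i j * w i := Finset.sum_comm
        _ = ∑ i, d * w i := by
            apply Finset.sum_congr rfl
            intro i _
            rw [← Finset.sum_mul, hreg i]
    rw [Finset.sum_sub_distrib, h1, sub_self]
  have heq : Aᵀ.mulVec w = d • w := by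
    funext j
    have := (Finset.sum_eq_zero_iff_of_nonneg (fun l _ => sub_nonneg.mpr (hge l))).mp
      hsum j (Finset.mem_univ j)
    have h2 : (Aᵀ.mulVec w) j = d * w j := by linarith [sub_eq_zero.mp this]
    simpa [smul_eq_mul] using h2
  refine ⟨w, ?_, heq⟩
  have hex : ∃ j₀, 0 < w j₀ := by
    by_contra hcon
    push_neg at hcon
    apply hyne
    funext j
    have := hcon j
    have h2 : 0 ≤ w j := abs_nonneg _
    have : w j = 0 := le_antisymm this h2
    simpa [hw_def, abs_eq_zero] using this
  obtain ⟨j₀, hj₀⟩ := hex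
  intro i
  obtain ⟨m, -, hmne⟩ := hirr j₀ i
  have hpow := mulVec_pow_eig Aᵀ w d heq m
  have hTm : (Aᵀ) ^ m = (A ^ m)ᵀ := (Matrix.transpose_pow A m).symm
  have h1 : d ^ m * w i = ∑ l, (A ^ m) l i * w l := by
    have := congrFun hpow i
    rw [hTm] at this
    simp only [Matrix.mulVec, dotProduct, Pi.smul_apply, smul_eq_mul] at this
    rw [← this]
    rfl
  have h2 : (A ^ m) j₀ i * w j₀ ≤ ∑ l, (A ^ m) l i * w l := by
    apply Finset.single_le_sum (f := fun l => (A ^ m) l i * w l)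
    · intro l _
      exact mul_nonneg (pow_entry_nonneg A hA m l i) (abs_nonneg _)
    · exact Finset.mem_univ j₀
  have h3 : 0 < (A ^ m) j₀ i * w j₀ :=
    mul_pos (lt_of_le_of_ne (pow_entry_nonneg A hA m j₀ i) (Ne.symm hmne)) hj₀
  have h4 : 0 < d ^ m * w i := by linarith
  have h5 : (0:ℝ) < d ^ m := pow_pos hd m
  nlinarith

lemma gershgorin (A : Matrix (Fin N) (Fin N) ℝ) (hA : ∀ i j, 0 ≤ A i j)
    (d : ℝ) (hreg : ∀ i, ∑ j, A i j = d) (μ : ℂ)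
    (hμ : μ ∈ (A.map Complex.ofReal).charpoly.roots) : ‖μ‖ ≤ d := by
  have hroot : ((A.map Complex.ofReal).charpoly).IsRoot μ := (Polynomial.mem_roots'.mp hμ).2
  have hdet : (μ • (1 : Matrix (Fin N) (Fin N) ℂ) - A.map Complex.ofReal).det = 0 := by
    rw [← eval_charpoly']
    exact hroot
  obtain ⟨v, hvne, hv0⟩ := Matrix.exists_mulVec_eq_zero_iff.mpr hdet
  have hv : (A.map Complex.ofReal).mulVec v = μ • v := by
    rw [Matrix.sub_mulVec, Matrix.smul_mulVec, Matrix.one_mulVec, sub_eq_zero] at hv0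
    exact hv0.symm
  haveI : Nonempty (Fin N) := by
    by_contra h
    rw [not_nonempty_iff] at h
    apply hvne
    funext i
    exact absurd (Fintype.card_pos_iff.mpr ⟨i⟩) (by simp [Fintype.card_eq_zero])
  obtain ⟨i, -, hi⟩ := Finset.exists_max_image Finset.univ (fun i => ‖v i‖)
    ⟨Classical.arbitrary (Fin N), Finset.mem_univ _⟩
  have hvi : 0 < ‖v i‖ := by
    by_contra hcon
    push_neg at hcon
    have hvi0 : ‖v i‖ = 0 := le_antisymm hcon (norm_nonneg _)
    apply hvne
    funext j
    have h2 := le_trans (hi j (Finset.mem_univ j)) (le_of_eq hvi0)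
    exact norm_eq_zero.mp (le_antisymm h2 (norm_nonneg _))
  have hkey : ‖μ‖ * ‖v i‖ ≤ d * ‖v i‖ := by
    have h1 : μ * v i = ∑ j, (A i j : ℂ) * v j := by
      have := congrFun hv i
      simp only [Matrix.mulVec, dotProduct, Matrix.map_apply, Pi.smul_apply,
        smul_eq_mul] at this
      rw [← this]
    calc ‖μ‖ * ‖v i‖ = ‖μ * v i‖ := (norm_mul μ (v i)).symm
      _ = ‖∑ j, (A i j : ℂ) * v j‖ := by rw [h1]
      _ ≤ ∑ j, ‖(A i j : ℂ) * v j‖ := norm_sum_le _ _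
      _ = ∑ j, A i j * ‖v j‖ := by
          apply Finset.sum_congr rfl
          intro j _
          rw [norm_mul, Complex.norm_real, Real.norm_eq_abs, _root_.abs_of_nonneg (hA i j)]
      _ ≤ ∑ j, A i j * ‖v i‖ := by
          apply Finset.sum_le_sum
          intro j _
          exact mul_le_mul_of_nonneg_left (hi j (Finset.mem_univ j)) (hA i j)
      _ = d * ‖v i‖ := by rw [← Finset.sum_mul, hreg i]
  exact le_of_mul_le_mul_right hkey hvi

open Module Module.Free in
lemma charpoly_decomp {K M : Type*} [Field K] [AddCommGroup M] [Module K M]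
    [FiniteDimensional K M] (φ : Module.End K M) {V W : Submodule K M} (hVW : IsCompl V W)
    (hV : ∀ x ∈ V, φ x ∈ V) (hW : ∀ x ∈ W, φ x ∈ W) :
    LinearMap.charpoly φ
      = LinearMap.charpoly (φ.restrict hV) * LinearMap.charpoly (φ.restrict hW) := by
  let F := φ.restrict hV
  let G := φ.restrict hW
  let ψ := F.prodMap G
  let e := Submodule.prodEquivOfIsCompl V W hVW
  let bV := chooseBasis K V
  let bW := chooseBasis K W
  let b := bV.prod bW
  have hψ : ψ = e.symm.conj φ := by
    apply b.ext
    simp only [Basis.prod_apply, LinearMap.coe_inl, LinearMap.coe_inr, LinearMap.prodMap_apply,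
      LinearEquiv.conj_apply, LinearEquiv.symm_symm, Submodule.coe_prodEquivOfIsCompl,
      LinearMap.coe_comp, LinearEquiv.coe_coe, Function.comp_apply, LinearMap.coprod_apply,
      Submodule.coe_subtype, map_add, Sum.forall, Sum.elim_inl, map_zero,
      ZeroMemClass.coe_zero, add_zero, LinearEquiv.eq_symm_apply, and_self,
      Submodule.coe_prodEquivOfIsCompl', LinearMap.restrict_coe_apply, implies_true,
      Sum.elim_inr, zero_add, e, ψ, F, G, b]
  rw [← e.symm.charpoly_conj φ, ← hψ]
  exact LinearMap.charpoly_prodMap F G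


set_option maxHeartbeats 1600000 in
set_option synthInstance.maxHeartbeats 1000000 in
lemma pf_simple {N : ℕ} (hN : 0 < N) (A : Matrix (Fin N) (Fin N) ℝ) (hA : ∀ i j, 0 ≤ A i j)
    (hirr : MatrixIsIrreducible A) (d : ℝ) (hd : 0 < d) (hreg : ∀ i, ∑ j, A i j = d) :
    (A.map Complex.ofReal).charpoly.roots.count (d : ℂ) = 1 := by
  classical
  obtain ⟨w, hwpos, hw⟩ := left_eig hN A hA hirr d hd hreg
  set A' := A.map Complex.ofReal with hA'_def
  set f : Module.End ℂ (Fin N → ℂ) := Matrix.toLin' A' with hf_def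
  have hf : ∀ v, f v = A'.mulVec v := fun v => Matrix.toLin'_apply A' v
  set u : Fin N → ℂ := fun _ => 1 with hu_def
  have hune : u ≠ 0 := by
    intro h
    have := congrFun h ⟨0, hN⟩
    simp [hu_def] at this
  have hu : A'.mulVec u = (d : ℂ) • u := by
    funext i
    simp [hA'_def, Matrix.mulVec, dotProduct, Matrix.map_apply, hu_def]
    rw [← Complex.ofReal_sum]
    simp [hreg i]
  -- the functional
  set φ : (Fin N → ℂ) →ₗ[ℂ] ℂ :=
    { toFun := fun x => ∑ i, (w i : ℂ) * x i
      map_add' := by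
        intro x y
        simp [mul_add, Finset.sum_add_distrib]
      map_smul' := by
        intro c x
        simp [Finset.mul_sum]
        apply Finset.sum_congr rfl
        intro i _
        ring } with hφ_def
  have hφ_apply : ∀ x, φ x = ∑ i, (w i : ℂ) * x i := fun x => rfl
  set V : Submodule ℂ (Fin N → ℂ) := Submodule.span ℂ {u} with hV_def
  set W : Submodule ℂ (Fin N → ℂ) := LinearMap.ker φ with hW_def
  have hswR : (0 : ℝ) < ∑ i, w i := by
    apply Finset.sum_pos (fun i _ => hwpos i)
    exact ⟨⟨0, hN⟩, Finset.mem_univ _⟩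
  have hsw : (∑ i, (w i : ℂ)) ≠ 0 := by
    rw [← Complex.ofReal_sum]
    simp only [ne_eq, Complex.ofReal_eq_zero]
    exact ne_of_gt hswR
  have hφu : φ u = ∑ i, (w i : ℂ) := by simp [hφ_apply, hu_def]
  -- transpose eigen equation, complexified
  have hwA : ∀ j, ∑ i, (w i : ℂ) * (A i j : ℂ) = (d : ℂ) * (w j : ℂ) := by
    intro j
    have := congrFun hw j
    simp only [Matrix.mulVec, dotProduct, Matrix.transpose_apply, Pi.smul_apply,
      smul_eq_mul] at this
    have h2 : ((∑ i, A i j * w i : ℝ) : ℂ) = ((d * w j : ℝ) : ℂ) := by rw [this]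
    rw [Complex.ofReal_sum] at h2
    simp only [Complex.ofReal_mul] at h2
    rw [← h2]
    apply Finset.sum_congr rfl
    intro i _
    ring
  have hVmap : ∀ x ∈ V, f x ∈ V := by
    intro x hx
    rw [hV_def, Submodule.mem_span_singleton] at hx ⊢
    obtain ⟨k, rfl⟩ := hx
    refine ⟨k * d, ?_⟩
    rw [_root_.map_smul, hf, hu, smul_smul, mul_comm]
  have hWmap : ∀ x ∈ W, f x ∈ W := by
    intro x hx
    rw [hW_def, LinearMap.mem_ker] at hx ⊢
    rw [hf]
    have hφf : φ (A'.mulVec x) = (d : ℂ) * φ x := by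
      rw [hφ_apply, hφ_apply]
      have h1 : ∀ i, (w i : ℂ) * (A'.mulVec x) i = ∑ j, (w i : ℂ) * (A i j : ℂ) * x j := by
        intro i
        simp only [Matrix.mulVec, dotProduct, hA'_def, Matrix.map_apply]
        rw [Finset.mul_sum]
        apply Finset.sum_congr rfl
        intro j _
        ring
      calc ∑ i, (w i : ℂ) * (A'.mulVec x) i = ∑ i, ∑ j, (w i : ℂ) * (A i j : ℂ) * x j := by
            apply Finset.sum_congr rfl
            intro i _
            exact h1 i
        _ = ∑ j, (∑ i, (w i : ℂ) * (A i j : ℂ)) * x j := by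
            rw [Finset.sum_comm]
            apply Finset.sum_congr rfl
            intro j _
            rw [Finset.sum_mul]
        _ = ∑ j, ((d : ℂ) * (w j : ℂ)) * x j := by
            apply Finset.sum_congr rfl
            intro j _
            rw [hwA j]
        _ = (d : ℂ) * ∑ j, (w j : ℂ) * x j := by
            rw [Finset.mul_sum]
            apply Finset.sum_congr rfl
            intro j _
            ring
    rw [hφf, hx, mul_zero]
  have hVW : IsCompl V W := by
    constructor
    · rw [Submodule.disjoint_def]
      intro x hxV hxW
      rw [hV_def, Submodule.mem_span_singleton] at hxV
      obtain ⟨k, rfl⟩ := hxV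
      rw [hW_def, LinearMap.mem_ker, _root_.map_smul, hφu, smul_eq_mul] at hxW
      rcases mul_eq_zero.mp hxW with h | h
      · rw [h, zero_smul]
      · exact absurd h hsw
    · rw [codisjoint_iff, eq_top_iff]
      intro x _
      have hdecomp : x = (φ x / ∑ i, (w i : ℂ)) • u + (x - (φ x / ∑ i, (w i : ℂ)) • u) := by
        abel
      rw [hdecomp]
      apply Submodule.add_mem_sup
      · exact Submodule.smul_mem _ _ (Submodule.mem_span_singleton_self u)
      · rw [hW_def, LinearMap.mem_ker, map_sub, _root_.map_smul, hφu, smul_eq_mul,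
          div_mul_cancel₀ _ hsw, sub_self]
  -- decomposition of charpoly
  have hchar : A'.charpoly = LinearMap.charpoly f := by
    rw [← LinearMap.charpoly_toMatrix f (Pi.basisFun ℂ (Fin N))]
    congr 1
    rw [LinearMap.toMatrix_eq_toMatrix']
    exact (LinearMap.toMatrix'_toLin' A').symm
  have hdec := charpoly_decomp f hVW hVmap hWmap
  set F := f.restrict hVmap with hF_def
  set G := f.restrict hWmap with hG_def
  -- charpoly F = X - C d
  have hVrank : Module.finrank ℂ V = 1 := finrank_span_singleton hune
  have hFdeg : (LinearMap.charpoly F).natDegree = 1 := by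
    rw [LinearMap.charpoly_natDegree, hVrank]
  have hFev : (LinearMap.charpoly F).eval (d : ℂ) = 0 := by
    have hdet0 : LinearMap.det ((d : ℂ) • (LinearMap.id : V →ₗ[ℂ] V) - F) = 0 := by
      apply ((LinearMap.hasEigenvalue_zero_tfae ((d : ℂ) • (LinearMap.id : V →ₗ[ℂ] V) - F)).out 3 5).mpr
      refine ⟨⟨u, Submodule.mem_span_singleton_self u⟩, ?_, ?_⟩
      · intro h
        rw [Submodule.mk_eq_zero] at h
        exact hune h
      · apply Subtype.ext
        simp only [LinearMap.sub_apply, LinearMap.smul_apply, LinearMap.id_apply,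
          AddSubgroupClass.coe_sub, SetLike.val_smul, ZeroMemClass.coe_zero]
        rw [LinearMap.restrict_coe_apply, hf, hu]
        simp
    have hmat : (LinearMap.charpoly F).eval (d : ℂ)
        = LinearMap.det ((d : ℂ) • (LinearMap.id : V →ₗ[ℂ] V) - F) := by
      rw [LinearMap.charpoly_def, eval_charpoly']
      have h9 : (d : ℂ) • (1 : Matrix _ _ ℂ)
            - (LinearMap.toMatrix (Module.Free.chooseBasis ℂ V) (Module.Free.chooseBasis ℂ V)) F
          = (LinearMap.toMatrix (Module.Free.chooseBasis ℂ V) (Module.Free.chooseBasis ℂ V))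
              ((d : ℂ) • LinearMap.id - F) := by
        rw [map_sub (LinearMap.toMatrix (Module.Free.chooseBasis ℂ V)
            (Module.Free.chooseBasis ℂ V)) ((d : ℂ) • LinearMap.id) F,
          _root_.map_smul, LinearMap.toMatrix_id]
      rw [h9, LinearMap.det_toMatrix]
    rw [hmat, hdet0]
  have hFeq : LinearMap.charpoly F = X - C (d : ℂ) := by
    have hmono := LinearMap.charpoly_monic F
    have h1 := hmono.eq_X_add_C hFdeg
    rw [h1] at hFev ⊢
    simp only [eval_add, eval_X, eval_C] at hFev
    have : (LinearMap.charpoly F).coeff 0 = -(d : ℂ) := by linear_combination hFev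
    rw [this, Polynomial.C_neg, ← sub_eq_add_neg]
  -- charpoly G has no root at d
  have hGev : (LinearMap.charpoly G).eval (d : ℂ) ≠ 0 := by
    intro hev
    have hmat : (LinearMap.charpoly G).eval (d : ℂ)
        = LinearMap.det ((d : ℂ) • (LinearMap.id : W →ₗ[ℂ] W) - G) := by
      rw [LinearMap.charpoly_def, eval_charpoly']
      have h9 : (d : ℂ) • (1 : Matrix _ _ ℂ)
            - (LinearMap.toMatrix (Module.Free.chooseBasis ℂ W) (Module.Free.chooseBasis ℂ W)) G
          = (LinearMap.toMatrix (Module.Free.chooseBasis ℂ W) (Module.Free.chooseBasis ℂ W))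
              ((d : ℂ) • LinearMap.id - G) := by
        rw [map_sub (LinearMap.toMatrix (Module.Free.chooseBasis ℂ W)
            (Module.Free.chooseBasis ℂ W)) ((d : ℂ) • LinearMap.id) G,
          _root_.map_smul, LinearMap.toMatrix_id]
      rw [h9, LinearMap.det_toMatrix]
    rw [hmat] at hev
    obtain ⟨x, hxne, hx0⟩ :=
      ((LinearMap.hasEigenvalue_zero_tfae ((d : ℂ) • (LinearMap.id : W →ₗ[ℂ] W) - G)).out 3 5).mp hev
    have hGx : f (x : Fin N → ℂ) = (d : ℂ) • (x : Fin N → ℂ) := by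
      have h1 := congrArg (Subtype.val) hx0
      simp only [LinearMap.sub_apply, LinearMap.smul_apply, LinearMap.id_apply,
        AddSubgroupClass.coe_sub, SetLike.val_smul, ZeroMemClass.coe_zero] at h1
      rw [LinearMap.restrict_coe_apply] at h1
      rw [← sub_eq_zero]
      rw [sub_eq_zero] at h1
      rw [← h1]
      abel
    obtain ⟨k, hk⟩ := eig_const_c hN A hA hirr d hd hreg x (by rw [← hf]; exact hGx)
    have hxu : (x : Fin N → ℂ) = k • u := by
      rw [hk]
      funext i
      simp [hu_def]
    have hxW : (∑ i, (w i : ℂ)) * k = 0 := by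
      have h2 : φ (x : Fin N → ℂ) = 0 := x.2
      rw [hφ_apply] at h2
      rw [Finset.sum_mul, ← h2]
      apply Finset.sum_congr rfl
      intro i _
      rw [congrFun hk i]
    rcases mul_eq_zero.mp hxW with h | h
    · exact hsw h
    · apply hxne
      apply Subtype.ext
      rw [hxu, h, zero_smul]
      rfl
  -- conclude
  rw [Polynomial.count_roots]
  rw [hchar, hdec, hFeq]
  have hGne : LinearMap.charpoly G ≠ 0 := (LinearMap.charpoly_monic G).ne_zero
  rw [Polynomial.rootMultiplicity_mul (mul_ne_zero (X_sub_C_ne_zero _) hGne)]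
  rw [Polynomial.rootMultiplicity_X_sub_C_self]
  rw [Polynomial.rootMultiplicity_eq_zero (by simpa [Polynomial.IsRoot] using hGev)]


end Stmt13Aux

open Stmt13Aux

set_option maxHeartbeats 4000000 in
set_option synthInstance.maxHeartbeats 400000 in
/-- Theorem 2 (in-regular case), spectral picture: for `β = (1+ε-α)/d⁻` and
sufficiently small `ε > 0`, the Jacobian has exactly two eigenvalues (with
multiplicity) on the imaginary axis, namely `±i√(ε(1-ε))`, and all other
`2N - 2` eigenvalues have strictly negative real part. -/
theorem stmt_13 (N : ℕ) (hN : 0 < N) (A : Matrix (Fin N) (Fin N) ℝ)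
    (hA : ∀ i j, 0 ≤ A i j) (hdiag : ∀ i, A i i = 0) (hirr : MatrixIsIrreducible A)
    (d : ℝ) (hd : 0 < d) (hreg : ∀ i, ∑ j, A i j = d)
    (α : ℝ) (hα0 : 0 ≤ α) (hα1 : α < 1) :
    ∃ ε₀ > 0, ∀ ε : ℝ, 0 < ε → ε < ε₀ →
      (Multiset.card
        (((Matrix.fromBlocks
            (-((1 - (α : ℂ)) • (1 : Matrix (Fin N) (Fin N) ℂ))
              + (((1 + ε - α) / d : ℝ) : ℂ) • A.map Complex.ofReal)
            (-(1 : Matrix (Fin N) (Fin N) ℂ))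
            ((ε : ℂ) • (1 : Matrix (Fin N) (Fin N) ℂ))
            (-((ε : ℂ) • (1 : Matrix (Fin N) (Fin N) ℂ)))).charpoly.roots).filter
          (fun z => z.re = 0)) = 2)
      ∧ Complex.I * (Real.sqrt (ε * (1 - ε)) : ℂ) ∈
          ((Matrix.fromBlocks
            (-((1 - (α : ℂ)) • (1 : Matrix (Fin N) (Fin N) ℂ))
              + (((1 + ε - α) / d : ℝ) : ℂ) • A.map Complex.ofReal)
            (-(1 : Matrix (Fin N) (Fin N) ℂ))
            ((ε : ℂ) • (1 : Matrix (Fin N) (Fin N) ℂ))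
            (-((ε : ℂ) • (1 : Matrix (Fin N) (Fin N) ℂ)))).charpoly.roots)
      ∧ -(Complex.I * (Real.sqrt (ε * (1 - ε)) : ℂ)) ∈
          ((Matrix.fromBlocks
            (-((1 - (α : ℂ)) • (1 : Matrix (Fin N) (Fin N) ℂ))
              + (((1 + ε - α) / d : ℝ) : ℂ) • A.map Complex.ofReal)
            (-(1 : Matrix (Fin N) (Fin N) ℂ))
            ((ε : ℂ) • (1 : Matrix (Fin N) (Fin N) ℂ))
            (-((ε : ℂ) • (1 : Matrix (Fin N) (Fin N) ℂ)))).charpoly.roots)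
      ∧ ∀ z ∈ ((Matrix.fromBlocks
            (-((1 - (α : ℂ)) • (1 : Matrix (Fin N) (Fin N) ℂ))
              + (((1 + ε - α) / d : ℝ) : ℂ) • A.map Complex.ofReal)
            (-(1 : Matrix (Fin N) (Fin N) ℂ))
            ((ε : ℂ) • (1 : Matrix (Fin N) (Fin N) ℂ))
            (-((ε : ℂ) • (1 : Matrix (Fin N) (Fin N) ℂ)))).charpoly.roots),
          z.re ≠ 0 → z.re < 0 := by
  classical
  set A' := A.map Complex.ofReal with hA'_def
  set R : Multiset ℂ := A'.charpoly.roots with hR_def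
  have hGer : ∀ μ ∈ R, ‖μ‖ ≤ d := fun μ hμ => gershgorin A hA d hreg μ hμ
  have hcount : R.count (d : ℂ) = 1 := pf_simple hN A hA hirr d hd hreg
  have hdmem : (d : ℂ) ∈ R := by
    rw [← Multiset.count_pos, hcount]
    norm_num
  set R₀ : Multiset ℂ := R.erase (d : ℂ) with hR₀_def
  have hRsplit : R = (d : ℂ) ::ₘ R₀ := (Multiset.cons_erase hdmem).symm
  have hR₀count : R₀.count (d : ℂ) = 0 := by
    rw [hR₀_def, Multiset.count_erase_self, hcount]
  have hR₀ne : ∀ μ ∈ R₀, μ ≠ (d : ℂ) := by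
    intro μ hμ h
    rw [h] at hμ
    have := Multiset.count_pos.mpr hμ
    omega
  have hR₀mem : ∀ μ ∈ R₀, μ ∈ R := fun μ hμ => Multiset.mem_of_mem_erase hμ
  have hRe : ∀ μ ∈ R₀, μ.re < d := by
    intro μ hμ
    have habs := hGer μ (hR₀mem μ hμ)
    have hne := hR₀ne μ hμ
    rcases lt_or_ge μ.re d with h | h
    · exact h
    · exfalso
      have h1 : μ.re ≤ ‖μ‖ := Complex.re_le_norm μ
      have h2 : μ.re = d := le_antisymm (h1.trans habs) h
      have h3 : Complex.normSq μ ≤ d ^ 2 := by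
        have := Complex.sq_norm μ
        nlinarith [norm_nonneg μ]
      have h4 : μ.im = 0 := by
        have := Complex.normSq_apply μ
        nlinarith [sq_nonneg μ.im]
      exact hne (Complex.ext h2 h4)
  -- spectral gap δ
  set S : Finset ℝ := R₀.toFinset.image Complex.re with hS_def
  set δ : ℝ := if h : S.Nonempty then d - S.max' h else 1 with hδ_def
  have hδpos : 0 < δ := by
    rw [hδ_def]
    split_ifs with h
    · obtain ⟨μ, hμ, hμeq⟩ := Finset.mem_image.mp (S.max'_mem h)
      rw [← hμeq]
      have := hRe μ (Multiset.mem_toFinset.mp hμ)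
      linarith
    · norm_num
  have hδle : ∀ μ ∈ R₀, μ.re ≤ d - δ := by
    intro μ hμ
    rw [hδ_def]
    have hSne : S.Nonempty := ⟨μ.re, Finset.mem_image.mpr ⟨μ, Multiset.mem_toFinset.mpr hμ, rfl⟩⟩
    rw [dif_pos hSne]
    have := S.le_max' μ.re (Finset.mem_image.mpr ⟨μ, Multiset.mem_toFinset.mpr hμ, rfl⟩)
    linarith
  set c : ℝ := (1 - α) * δ / d with hc_def
  have hc : 0 < c := by
    apply div_pos (mul_pos (by linarith) hδpos) hd
  refine ⟨min (min (1/2) (c/4)) (c^2/64), by positivity, ?_⟩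
  intro ε hε hεlt
  have hε1 : ε ≤ 1 := by
    have := lt_of_lt_of_le hεlt (le_trans (min_le_left _ _) (min_le_left _ _))
    linarith
  have hεhalf : ε < 1 := by
    have := lt_of_lt_of_le hεlt (le_trans (min_le_left _ _) (min_le_left _ _))
    linarith
  have hε2 : ε ≤ c / 4 := le_of_lt (lt_of_lt_of_le hεlt
    (le_trans (min_le_left _ _) (min_le_right _ _)))
  have hε3 : ε ≤ c ^ 2 / 64 := le_of_lt (lt_of_lt_of_le hεlt (min_le_right _ _))
  -- abbreviations
  set βC : ℂ := (((1 + ε - α) / d : ℝ) : ℂ) with hβC_def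
  set M' : Matrix (Fin N) (Fin N) ℂ :=
    -((1 - (α : ℂ)) • (1 : Matrix (Fin N) (Fin N) ℂ)) + βC • A' with hM'_def
  set J : Matrix (Fin N ⊕ Fin N) (Fin N ⊕ Fin N) ℂ :=
    Matrix.fromBlocks M' (-(1 : Matrix (Fin N) (Fin N) ℂ))
      ((ε : ℂ) • (1 : Matrix (Fin N) (Fin N) ℂ))
      (-((ε : ℂ) • (1 : Matrix (Fin N) (Fin N) ℂ))) with hJ_def
  set m : ℂ → ℂ := fun μ => βC * μ - (1 - (α : ℂ)) with hm_def
  set q : ℂ → Polynomial ℂ :=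
    fun μ => X ^ 2 + (C ((ε : ℂ) - m μ) * X + C ((ε : ℂ) * (1 - m μ))) with hq_def
  have hqmonic : ∀ μ, (q μ).Monic := by
    intro μ
    apply Polynomial.monic_X_pow_add
    exact lt_of_le_of_lt Polynomial.degree_linear_le (by norm_num)
  have hqeval : ∀ μ z : ℂ, (q μ).eval z = z ^ 2 + ((ε : ℂ) - m μ) * z + (ε : ℂ) * (1 - m μ) := by
    intro μ z
    simp [hq_def]
    ring
  -- main polynomial identity
  have hcharJ : J.charpoly = (R.map q).prod := by
    apply Polynomial.eq_of_infinite_eval_eq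
    apply Set.Infinite.mono (s := {(-(ε : ℂ))}ᶜ)
    swap
    · exact Set.Finite.infinite_compl (Set.finite_singleton _)
    intro z hz
    have hzε : z + (ε : ℂ) ≠ 0 := by
      intro h
      apply hz
      simp only [Set.mem_singleton_iff]
      linear_combination h
    simp only [Set.mem_setOf_eq]
    rw [eval_charpoly']
    -- block structure of z•1 - J
    have hblock : z • (1 : Matrix (Fin N ⊕ Fin N) (Fin N ⊕ Fin N) ℂ) - J
        = Matrix.fromBlocks (z • 1 - M') (1 : Matrix (Fin N) (Fin N) ℂ)
            (-((ε : ℂ) • (1 : Matrix (Fin N) (Fin N) ℂ))) ((z + (ε : ℂ)) • 1) := by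
      ext i j
      rcases i with i | i <;> rcases j with j | j <;>
        simp [hJ_def, Matrix.fromBlocks, Matrix.one_apply, Matrix.smul_apply, Matrix.sub_apply,
          Matrix.add_apply, Matrix.neg_apply] <;> split_ifs <;> ring
    rw [hblock]
    -- factor out the lower right block
    have hfac : Matrix.fromBlocks (z • 1 - M') (1 : Matrix (Fin N) (Fin N) ℂ)
          (-((ε : ℂ) • (1 : Matrix (Fin N) (Fin N) ℂ))) ((z + (ε : ℂ)) • 1)
        = (Matrix.fromBlocks (z • 1 - M') ((z + (ε : ℂ))⁻¹ • (1 : Matrix (Fin N) (Fin N) ℂ))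
            (-((ε : ℂ) • (1 : Matrix (Fin N) (Fin N) ℂ))) 1)
          * (Matrix.fromBlocks 1 0 0 ((z + (ε : ℂ)) • (1 : Matrix (Fin N) (Fin N) ℂ))) := by
      rw [Matrix.fromBlocks_multiply]
      congr 1 <;> simp [Matrix.smul_mul, Matrix.mul_smul, smul_smul, inv_mul_cancel₀ hzε, mul_inv_cancel₀ hzε]
    rw [hfac, Matrix.det_mul, Matrix.det_fromBlocks_one₂₂, Matrix.det_fromBlocks_zero₂₁,
      Matrix.det_one, one_mul, Matrix.det_smul, Matrix.det_one, mul_one, Fintype.card_fin]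
    -- rewrite the first determinant
    have hkey : z • 1 - M' - ((z + (ε : ℂ))⁻¹ • (1 : Matrix (Fin N) (Fin N) ℂ))
            * (-((ε : ℂ) • (1 : Matrix (Fin N) (Fin N) ℂ)))
        = (z + (ε : ℂ))⁻¹ •
          ((z ^ 2 + (ε : ℂ) * z + (ε : ℂ) + (z + (ε : ℂ)) * (1 - (α : ℂ))) • 1
            - ((z + (ε : ℂ)) * βC) • A') := by
      ext i j
      simp [hM'_def, Matrix.smul_apply, Matrix.sub_apply, Matrix.add_apply, Matrix.neg_apply,
        Matrix.mul_apply, Matrix.one_apply, Finset.sum_ite_eq]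
      split_ifs <;> field_simp <;> ring
    rw [hkey, Matrix.det_smul, det_smul_one_sub_smul, Fintype.card_fin]
    rw [Polynomial.eval_multiset_prod, Multiset.map_map]
    have hmap : R.map (fun μ => (z ^ 2 + (ε : ℂ) * z + (ε : ℂ) + (z + (ε : ℂ)) * (1 - (α : ℂ)))
          - (z + (ε : ℂ)) * βC * μ) = R.map (Polynomial.eval z ∘ q) := by
      apply Multiset.map_congr rfl
      intro μ _
      simp only [Function.comp_apply, hqeval, hm_def]
      ring
    have hone : (z + (ε : ℂ))⁻¹ ^ N * (z + (ε : ℂ)) ^ N = 1 := by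
      rw [← mul_pow, inv_mul_cancel₀ hzε, one_pow]
    rw [← hR_def, hmap]
    calc (z + (ε : ℂ))⁻¹ ^ N * (Multiset.map (Polynomial.eval z ∘ q) R).prod * (z + (ε : ℂ)) ^ N
        = ((z + (ε : ℂ))⁻¹ ^ N * (z + (ε : ℂ)) ^ N)
            * (Multiset.map (Polynomial.eval z ∘ q) R).prod := by ring
      _ = (Multiset.map (Polynomial.eval z ∘ q) R).prod := by rw [hone, one_mul]
  -- roots decomposition
  have hq0 : (0 : Polynomial ℂ) ∉ R.map q := by
    intro h
    obtain ⟨μ, -, hμ⟩ := Multiset.mem_map.mp h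
    exact (hqmonic μ).ne_zero hμ
  have hroots : J.charpoly.roots = (q (d : ℂ)).roots + (R₀.map q).bind Polynomial.roots := by
    rw [hcharJ, Polynomial.roots_multiset_prod _ hq0, hRsplit, Multiset.map_cons,
      Multiset.cons_bind]
  -- the pure imaginary pair
  set s : ℝ := Real.sqrt (ε * (1 - ε)) with hs_def
  set a : ℂ := Complex.I * (s : ℂ) with ha_def
  have hs2 : s * s = ε * (1 - ε) := by
    rw [hs_def]
    exact Real.mul_self_sqrt (by nlinarith)
  have hmd : m (d : ℂ) = (ε : ℂ) := by
    simp only [hm_def, hβC_def]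
    rw [show ((d : ℝ) : ℂ) = ((d : ℝ) : ℂ) from rfl, ← Complex.ofReal_mul,
      div_mul_cancel₀ _ (ne_of_gt hd)]
    push_cast
    ring
  have ha2 : a * a = -((ε : ℂ) * (1 - (ε : ℂ))) := by
    rw [ha_def]
    have h1 : ((s : ℂ)) * (s : ℂ) = (ε : ℂ) * (1 - (ε : ℂ)) := by
      rw [← Complex.ofReal_mul, hs2]
      push_cast
      ring
    calc Complex.I * (s : ℂ) * (Complex.I * (s : ℂ))
        = Complex.I * Complex.I * ((s : ℂ) * (s : ℂ)) := by ring
      _ = -((ε : ℂ) * (1 - (ε : ℂ))) := by rw [Complex.I_mul_I, h1]; ring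
  have hqd : q (d : ℂ) = (X - C a) * (X - C (-a)) := by
    have hCa : C a * C (-a) = C ((ε : ℂ) * (1 - (ε : ℂ))) := by
      rw [← C_mul]
      congr 1
      linear_combination -ha2
    have hCsum : C a + C (-a) = (0 : Polynomial ℂ) := by
      rw [← C_add]
      simp
    rw [hq_def]
    simp only [hmd, sub_self, map_zero, zero_mul, zero_add]
    rw [show (X - C a) * (X - C (-a)) = X ^ 2 - (C a + C (-a)) * X + C a * C (-a) by ring,
      hCsum, hCa]
    ring
  have hql : (q (d : ℂ)).roots = a ::ₘ {-a} := by
    rw [hqd, Polynomial.roots_mul (mul_ne_zero (Polynomial.X_sub_C_ne_zero a)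
      (Polynomial.X_sub_C_ne_zero (-a))), Polynomial.roots_X_sub_C, Polynomial.roots_X_sub_C]
    rfl
  have hare : a.re = 0 := by
    rw [ha_def]
    simp [Complex.mul_re]
  have hnare : (-a).re = 0 := by
    rw [Complex.neg_re, hare, neg_zero]
  -- all other roots have negative real part
  have hrest : ∀ z ∈ (R₀.map q).bind Polynomial.roots, z.re < 0 := by
    intro z hzmem
    rw [Multiset.mem_bind] at hzmem
    obtain ⟨p, hp, hzp⟩ := hzmem
    rw [Multiset.mem_map] at hp
    obtain ⟨μ, hμ, rfl⟩ := hp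
    have hE : z ^ 2 + ((ε : ℂ) - m μ) * z + (ε : ℂ) * (1 - m μ) = 0 := by
      have h0 := Polynomial.isRoot_of_mem_roots hzp
      rw [Polynomial.IsRoot] at h0
      rw [← hqeval μ z, h0]
    have habsμ := hGer μ (hR₀mem μ hμ)
    have hreμ := hδle μ hμ
    have h1εα : (0:ℝ) < 1 + ε - α := by linarith
    have hm3 : ‖m μ‖ ≤ 3 := by
      rw [hm_def]
      calc ‖βC * μ - (1 - (α : ℂ))‖
          ≤ ‖βC * μ‖ + ‖-(1 - (α : ℂ))‖ := by
            simpa [sub_eq_add_neg] using norm_add_le (βC * μ) (-(1 - (α : ℂ)))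
        _ ≤ 3 := by
          rw [norm_neg, norm_mul]
          have h1 : ‖βC‖ = (1 + ε - α) / d := by
            rw [hβC_def, Complex.norm_real, Real.norm_eq_abs, _root_.abs_of_pos (by positivity)]
          have h2 : ‖1 - (α : ℂ)‖ = 1 - α := by
            rw [show (1 : ℂ) - (α : ℂ) = ((1 - α : ℝ) : ℂ) by push_cast; ring,
              Complex.norm_real, Real.norm_eq_abs, _root_.abs_of_pos (by linarith)]
          rw [h1, h2]
          have h3 : (1 + ε - α) / d * ‖μ‖ ≤ (1 + ε - α) / d * d :=
            mul_le_mul_of_nonneg_left habsμ (by positivity)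
          rw [div_mul_cancel₀ _ (ne_of_gt hd)] at h3
          linarith
    have hmre : (m μ).re ≤ ε - c := by
      rw [hm_def]
      have h1 : (βC * μ - (1 - (α : ℂ))).re = (1 + ε - α) / d * μ.re - (1 - α) := by
        simp [hβC_def, Complex.mul_re, Complex.sub_re, Complex.one_re]
      rw [h1]
      have h2 : (1 + ε - α) / d * μ.re ≤ (1 + ε - α) / d * (d - δ) :=
        mul_le_mul_of_nonneg_left hreμ (by positivity)
      have e1 : (1 + ε - α) / d * (d - δ) = (1 + ε - α) - (1 + ε - α) * δ / d := by
        field_simp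
      have e2 : (1 - α) * δ / d ≤ (1 + ε - α) * δ / d := by
        have h5 : (1 - α) * δ ≤ (1 + ε - α) * δ := by nlinarith
        exact (div_le_div_iff_of_pos_right hd).mpr h5
      rw [hc_def]
      rw [e1] at h2
      linarith
    set l2 : ℂ := m μ - (ε : ℂ) - z with hl2_def
    have hsum : z + l2 = m μ - (ε : ℂ) := by rw [hl2_def]; ring
    have hprod : z * l2 = (ε : ℂ) * (1 - m μ) := by rw [hl2_def]; linear_combination -hE
    exact quad_root_re_neg hc hε hε1 hε2 hε3 hm3 hmre hsum hprod
  -- conclusion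
  refine ⟨?_, ?_, ?_, ?_⟩
  · rw [hroots, Multiset.filter_add, Multiset.card_add, hql]
    have hf1 : Multiset.filter (fun z => z.re = 0) (a ::ₘ {-a}) = a ::ₘ {-a} := by
      apply Multiset.filter_eq_self.mpr
      intro z hz
      rcases Multiset.mem_cons.mp hz with h | h
      · rw [h]; exact hare
      · rw [Multiset.mem_singleton.mp h]; exact hnare
    have hf2 : Multiset.filter (fun z => z.re = 0) ((R₀.map q).bind Polynomial.roots) = 0 :=
      Multiset.filter_eq_nil.mpr (fun z hz => ne_of_lt (hrest z hz))
    rw [hf1, hf2]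
    simp
  · rw [hroots]
    exact Multiset.mem_add.mpr (Or.inl (by rw [hql]; exact Multiset.mem_cons_self _ _))
  · rw [hroots]
    refine Multiset.mem_add.mpr (Or.inl ?_)
    rw [hql]
    exact Multiset.mem_cons.mpr (Or.inr (Multiset.mem_singleton_self _))
  · intro z hzmem hzre
    rw [hroots] at hzmem
    rcases Multiset.mem_add.mp hzmem with h | h
    · exfalso
      rw [hql] at h
      rcases Multiset.mem_cons.mp h with h1 | h1
      · rw [h1] at hzre; exact hzre hare
      · rw [Multiset.mem_singleton.mp h1] at hzre; exact hzre hnare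
    · exact hrest z h
end

section
/- Let A be an irreducible non-negative N×N matrix with zero diagonal, ρ > 0 its Perron-Frobenius (spectral radius) eigenvalue, x₀ > 0 the associated Perron eigenvector, α ∈ [0,1), ε ∈ (0,1), and β = (1+ε-α)/ρ. Then J = [[-(1-α)I + βA, -I],[εI, -εI]] has purely imaginary eigenvalues ±i√(ε(1-ε)) with eigenvectors (x₀, (ε ∓ i√(ε(1-ε)))x₀). -/
open Matrix Complex

/-- Theorem 3, eigenstructure: with `ρ` the Perron eigenvalue of the
irreducible non-negative matrix `A`, `x₀ > 0` the Perron eigenvector, and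
`β = (1+ε-α)/ρ`, the Jacobian `J = [[-(1-α)I + βA, -I],[εI, -εI]]` has purely
imaginary eigenvalues `±i√(ε(1-ε))` with eigenvectors `(x₀, (ε ∓ i√(ε(1-ε)))x₀)`. -/
theorem stmt_15 (N : ℕ) (hN : 0 < N) (A : Matrix (Fin N) (Fin N) ℝ)
    (hA : ∀ i j, 0 ≤ A i j) (hdiag : ∀ i, A i i = 0) (hirr : MatrixIsIrreducible A)
    (ρ : ℝ) (hρ : 0 < ρ) (hspec : ∀ μ : ℂ, (A.map Complex.ofReal - μ • 1).det = 0 →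
      ‖μ‖ ≤ ρ)
    (x₀ : Fin N → ℝ) (hx₀ : ∀ i, 0 < x₀ i) (hPerron : A.mulVec x₀ = ρ • x₀)
    (α ε β : ℝ) (hα0 : 0 ≤ α) (hα1 : α < 1) (hε : 0 < ε) (hε1 : ε < 1)
    (hβ : β = (1 + ε - α) / ρ) :
    let ω : ℂ := Complex.I * (Real.sqrt (ε * (1 - ε)) : ℂ)
    let J : Matrix ((Fin N) ⊕ (Fin N)) ((Fin N) ⊕ (Fin N)) ℂ :=
      Matrix.fromBlocks
        (-((1 - (α : ℂ)) • (1 : Matrix (Fin N) (Fin N) ℂ)) + (β : ℂ) • A.map Complex.ofReal)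
        (-(1 : Matrix (Fin N) (Fin N) ℂ))
        ((ε : ℂ) • (1 : Matrix (Fin N) (Fin N) ℂ))
        (-((ε : ℂ) • (1 : Matrix (Fin N) (Fin N) ℂ)))
    J.mulVec (Sum.elim (fun i => ((x₀ i : ℂ))) (fun i => ((ε : ℂ) - ω) * (x₀ i : ℂ)))
      = ω • (Sum.elim (fun i => ((x₀ i : ℂ))) (fun i => ((ε : ℂ) - ω) * (x₀ i : ℂ)))
    ∧ J.mulVec (Sum.elim (fun i => ((x₀ i : ℂ))) (fun i => ((ε : ℂ) + ω) * (x₀ i : ℂ)))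
      = (-ω) • (Sum.elim (fun i => ((x₀ i : ℂ))) (fun i => ((ε : ℂ) + ω) * (x₀ i : ℂ)))
    ∧ ω.re = 0 ∧ ω ≠ 0 := by
  intro ω J
  have hεnn : (0:ℝ) ≤ ε * (1 - ε) := mul_nonneg hε.le (by linarith)
  have hω2 : ω * ω = -((ε : ℂ) * (1 - (ε : ℂ))) := by
    have hs : (Real.sqrt (ε * (1 - ε)) : ℂ) * (Real.sqrt (ε * (1 - ε)) : ℂ)
        = ((ε * (1 - ε) : ℝ) : ℂ) := by
      rw [← Complex.ofReal_mul, Real.mul_self_sqrt hεnn]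
    simp only [ω]
    rw [show Complex.I * (Real.sqrt (ε * (1 - ε)) : ℂ) *
        (Complex.I * (Real.sqrt (ε * (1 - ε)) : ℂ))
        = Complex.I * Complex.I * ((Real.sqrt (ε * (1 - ε)) : ℂ) *
          (Real.sqrt (ε * (1 - ε)) : ℂ)) by ring, Complex.I_mul_I, hs]
    push_cast
    ring
  have hβρ : (β : ℂ) * (ρ : ℂ) = 1 + (ε : ℂ) - (α : ℂ) := by
    have : β * ρ = 1 + ε - α := by
      rw [hβ, div_mul_cancel₀ _ hρ.ne']
    calc (β : ℂ) * (ρ : ℂ) = ((β * ρ : ℝ) : ℂ) := by push_cast; ring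
      _ = 1 + (ε : ℂ) - (α : ℂ) := by rw [this]; push_cast; ring
  have hAx : (A.map Complex.ofReal).mulVec (fun i => (x₀ i : ℂ))
      = fun i => (ρ : ℂ) * (x₀ i : ℂ) := by
    funext i
    have := congrFun hPerron i
    simp only [Matrix.mulVec, dotProduct, Pi.smul_apply, smul_eq_mul] at this ⊢
    simp only [Matrix.map_apply]
    calc (∑ j, ((A i j : ℂ)) * (x₀ j : ℂ)) = ((∑ j, A i j * x₀ j : ℝ) : ℂ) := by
          push_cast; ring
      _ = (ρ : ℂ) * (x₀ i : ℂ) := by rw [this]; push_cast; ring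
  have key : ∀ c : ℂ, c * c = -((ε : ℂ) * (1 - (ε:ℂ))) →
      J.mulVec (Sum.elim (fun i => ((x₀ i : ℂ))) (fun i => ((ε : ℂ) - c) * (x₀ i : ℂ)))
      = c • (Sum.elim (fun i => ((x₀ i : ℂ))) (fun i => ((ε : ℂ) - c) * (x₀ i : ℂ))) := by
    intro c hc
    rw [Matrix.fromBlocks_mulVec]
    funext i
    cases i with
    | inl i =>
      simp only [Sum.elim_inl, Sum.elim_comp_inl, Sum.elim_comp_inr, Pi.add_apply,
        Matrix.add_mulVec, Matrix.neg_mulVec, Matrix.smul_mulVec,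
        Matrix.one_mulVec, Pi.neg_apply, Pi.smul_apply, smul_eq_mul, hAx]
      have : (β : ℂ) * ((ρ : ℂ) * (x₀ i : ℂ)) = (1 + (ε:ℂ) - (α:ℂ)) * (x₀ i : ℂ) := by
        rw [← mul_assoc, hβρ]
      linear_combination this
    | inr i =>
      simp only [Sum.elim_inr, Sum.elim_comp_inl, Sum.elim_comp_inr, Pi.add_apply,
        Matrix.neg_mulVec, Matrix.smul_mulVec, Matrix.one_mulVec,
        Pi.neg_apply, Pi.smul_apply, smul_eq_mul]
      linear_combination (x₀ i : ℂ) * hc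
  have hωre : ω.re = 0 := by simp [ω]
  have hωne : ω ≠ 0 := by
    simp only [ω, mul_ne_zero_iff]
    constructor
    · exact Complex.I_ne_zero
    · simp only [ne_eq, Complex.ofReal_eq_zero]
      exact (Real.sqrt_pos.mpr (by nlinarith)).ne'
  refine ⟨key ω hω2, ?_, hωre, hωne⟩
  have := key (-ω) (by rw [neg_mul_neg]; exact hω2)
  simpa [sub_neg_eq_add] using this
end

section
/- Let A be irreducible non-negative with Perron eigenvalue ρ and Perron eigenvector x₀ > 0, α ∈ [0,1), β = (1+ε-α)/ρ, and ε > 0 sufficiently small. Then the subspace E = {(r x₀, (εr + √(ε(1-ε))s) x₀) : r, s ∈ ℝ} ⊂ ℝ^{2N} is invariant under J = [[-(1-α)I + βA, -I],[εI, -εI]], J restricted to E has spectrum {±i√(ε(1-ε))}, and all eigenvalues of J not associated with E have strictly negative real part. -/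
open Matrix Complex

private lemma aux_mulVec (N : ℕ) (A : Matrix (Fin N) (Fin N) ℝ) (ρ : ℝ) (x₀ : Fin N → ℝ)
    (hPerron : A.mulVec x₀ = ρ • x₀) (α ε ω β : ℝ) (hβρ : β * ρ = 1 + ε - α)
    (hω2 : ω ^ 2 = ε * (1 - ε)) (r s : ℝ) :
    (Matrix.fromBlocks (-((1 - α) • (1 : Matrix (Fin N) (Fin N) ℝ)) + β • A)
          (-(1 : Matrix (Fin N) (Fin N) ℝ))
          (ε • (1 : Matrix (Fin N) (Fin N) ℝ)) (-(ε • (1 : Matrix (Fin N) (Fin N) ℝ)))).mulVec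
      (Sum.elim (fun i => r * x₀ i) (fun i => (ε * r + ω * s) * x₀ i))
    = Sum.elim (fun i => (-(ω * s)) * x₀ i) (fun i => (ε * (-(ω * s)) + ω * (ω * r)) * x₀ i) := by
  have h1 : (Sum.elim (fun i => r * x₀ i) (fun i => (ε * r + ω * s) * x₀ i) :
      (Fin N ⊕ Fin N) → ℝ) ∘ Sum.inl = r • x₀ := rfl
  have h2 : (Sum.elim (fun i => r * x₀ i) (fun i => (ε * r + ω * s) * x₀ i) :
      (Fin N ⊕ Fin N) → ℝ) ∘ Sum.inr = (ε * r + ω * s) • x₀ := rfl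
  rw [Matrix.fromBlocks_mulVec, h1, h2]
  funext x
  cases x with
  | inl i =>
    simp [Matrix.add_mulVec, Matrix.neg_mulVec, Matrix.smul_mulVec, Matrix.one_mulVec,
      Matrix.mulVec_smul, hPerron]
    linear_combination (r * x₀ i) * hβρ
  | inr i =>
    simp [Matrix.neg_mulVec, Matrix.smul_mulVec, Matrix.one_mulVec, Matrix.mulVec_smul]
    linear_combination (-(r * x₀ i)) * hω2

private lemma aux_det (N : ℕ) (A : Matrix (Fin N) (Fin N) ℝ) (α ε β : ℝ) (hβ : (β:ℂ) ≠ 0)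
    (lam : ℂ) (hne : lam + (ε:ℂ) ≠ 0)
    (hdet : (((Matrix.fromBlocks (-((1 - α) • (1 : Matrix (Fin N) (Fin N) ℝ)) + β • A)
          (-(1 : Matrix (Fin N) (Fin N) ℝ))
          (ε • (1 : Matrix (Fin N) (Fin N) ℝ))
          (-(ε • (1 : Matrix (Fin N) (Fin N) ℝ)))).map Complex.ofReal)
        - lam • (1 : Matrix ((Fin N) ⊕ (Fin N)) ((Fin N) ⊕ (Fin N)) ℂ)).det = 0) :
    (A.map Complex.ofReal - (((lam + ε/(lam+ε) + (1-α)) / β : ℂ)) • 1).det = 0 := by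
  set Ac := A.map Complex.ofReal with hAc
  set k : ℂ := -(lam + ε) with hk
  have hk0 : k ≠ 0 := neg_ne_zero.mpr hne
  have hblock : (((Matrix.fromBlocks (-((1 - α) • (1 : Matrix (Fin N) (Fin N) ℝ)) + β • A)
          (-(1 : Matrix (Fin N) (Fin N) ℝ))
          (ε • (1 : Matrix (Fin N) (Fin N) ℝ))
          (-(ε • (1 : Matrix (Fin N) (Fin N) ℝ)))).map Complex.ofReal)
        - lam • (1 : Matrix ((Fin N) ⊕ (Fin N)) ((Fin N) ⊕ (Fin N)) ℂ))
      = Matrix.fromBlocks ((β:ℂ) • Ac + (-(1-(α:ℂ)) - lam) • 1) (-1) ((ε:ℂ) • 1) (k • 1) := by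
    ext x y
    cases x with
    | inl i => cases y with
      | inl j =>
        by_cases h : i = j <;>
          simp [hAc, Matrix.one_apply, h, hk, Matrix.map_apply] <;> push_cast <;> ring
      | inr j =>
        by_cases h : i = j <;> simp [Matrix.one_apply, h, Matrix.map_apply]
    | inr i => cases y with
      | inl j =>
        by_cases h : i = j <;> simp [Matrix.one_apply, h, Matrix.map_apply]
      | inr j =>
        by_cases h : i = j <;>
          simp [Matrix.one_apply, h, hk, Matrix.map_apply] <;> push_cast <;> ring
  rw [hblock] at hdet
  letI : Invertible (k • (1 : Matrix (Fin N) (Fin N) ℂ)) :=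
    ⟨k⁻¹ • 1, by rw [smul_mul_smul_comm, inv_mul_cancel₀ hk0, one_mul, one_smul],
      by rw [smul_mul_smul_comm, mul_inv_cancel₀ hk0, one_mul, one_smul]⟩
  rw [Matrix.det_fromBlocks₂₂] at hdet
  have hinv : ⅟(k • (1 : Matrix (Fin N) (Fin N) ℂ)) = k⁻¹ • 1 := rfl
  have hdk : (k • (1 : Matrix (Fin N) (Fin N) ℂ)).det ≠ 0 := by
    rw [Matrix.det_smul, Matrix.det_one, mul_one]
    exact pow_ne_zero _ hk0
  have h2 : ((β:ℂ) • Ac + (-(1-(α:ℂ)) - lam) • 1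
      - (-1) * (⅟(k • (1 : Matrix (Fin N) (Fin N) ℂ))) * ((ε:ℂ) • 1)).det = 0 := by
    rcases mul_eq_zero.mp hdet with h | h
    · exact absurd h hdk
    · exact h
  have hT : ((-1 : Matrix (Fin N) (Fin N) ℂ)) * (k⁻¹ • 1) * ((ε:ℂ) • 1)
      = (-(k⁻¹ * ε)) • (1 : Matrix (Fin N) (Fin N) ℂ) := by
    ext i j
    by_cases h : i = j <;>
      simp [Matrix.mul_apply, Matrix.one_apply, h, Finset.sum_ite_eq, Finset.mul_sum] <;> ring
  have hscal : -(1-(α:ℂ)) - lam - (-(k⁻¹ * ε)) = -(lam + ε/(lam+ε) + (1-α)) := by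
    rw [hk, inv_neg]
    field_simp
    ring
  have h3 : (β:ℂ) • Ac + (-(1-(α:ℂ)) - lam) • 1
      - (-1) * (⅟(k • (1 : Matrix (Fin N) (Fin N) ℂ))) * ((ε:ℂ) • 1)
      = (β:ℂ) • (Ac - (((lam + ε/(lam+ε) + (1-α)) / β : ℂ)) • 1) := by
    rw [hinv, hT, smul_sub, smul_smul, mul_div_cancel₀ _ hβ, add_sub_assoc, ← sub_smul, hscal,
      neg_smul, ← sub_eq_add_neg]
  rw [h3, Matrix.det_smul] at h2
  rcases mul_eq_zero.mp h2 with h | h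
  · exact absurd h (pow_ne_zero _ hβ)
  · exact h

private lemma aux_charpoly_eval {n : Type*} [DecidableEq n] [Fintype n] {R : Type*} [CommRing R]
    (M : Matrix n n R) (t : R) : M.charpoly.eval t = (t • (1 : Matrix n n R) - M).det := by
  rw [Matrix.charpoly, ← Polynomial.coe_evalRingHom, RingHom.map_det]
  congr 1
  ext i j
  by_cases h : i = j <;>
    simp [Matrix.charmatrix_apply, Matrix.one_apply, h, Matrix.diagonal_apply]

/-- Theorem 3, center subspace and stability: with `β = (1+ε-α)/ρ` and `ε > 0`
sufficiently small, `E = {(r x₀, (εr + √(ε(1-ε))s) x₀)}` is invariant under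
`J = [[-(1-α)I + βA, -I],[εI, -εI]]`, `J|E` has spectrum `{±i√(ε(1-ε))}`
(encoded by `J u = ω v`, `J v = -ω u`), and all eigenvalues of `J` other than
`±i√(ε(1-ε))` have strictly negative real part. -/
theorem stmt_16 (N : ℕ) (hN : 0 < N) (A : Matrix (Fin N) (Fin N) ℝ)
    (hA : ∀ i j, 0 ≤ A i j) (hdiag : ∀ i, A i i = 0) (hirr : MatrixIsIrreducible A)
    (ρ : ℝ) (hρ : 0 < ρ) (hspec : ∀ μ : ℂ, (A.map Complex.ofReal - μ • 1).det = 0 →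
      ‖μ‖ ≤ ρ)
    (x₀ : Fin N → ℝ) (hx₀ : ∀ i, 0 < x₀ i) (hPerron : A.mulVec x₀ = ρ • x₀)
    (α : ℝ) (hα0 : 0 ≤ α) (hα1 : α < 1) :
    ∃ ε₀ > 0, ∀ ε : ℝ, 0 < ε → ε < ε₀ →
      let ω : ℝ := Real.sqrt (ε * (1 - ε))
      let β : ℝ := (1 + ε - α) / ρ
      let J : Matrix ((Fin N) ⊕ (Fin N)) ((Fin N) ⊕ (Fin N)) ℝ :=
        Matrix.fromBlocks (-((1 - α) • (1 : Matrix (Fin N) (Fin N) ℝ)) + β • A)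
          (-(1 : Matrix (Fin N) (Fin N) ℝ))
          (ε • (1 : Matrix (Fin N) (Fin N) ℝ)) (-(ε • (1 : Matrix (Fin N) (Fin N) ℝ)))
      let e : ℝ → ℝ → ((Fin N) ⊕ (Fin N)) → ℝ := fun r s =>
        Sum.elim (fun i => r * x₀ i) (fun i => (ε * r + ω * s) * x₀ i)
      (∀ r s : ℝ, ∃ r' s' : ℝ, J.mulVec (e r s) = e r' s')
      ∧ J.mulVec (e 1 0) = ω • (e 0 1)
      ∧ J.mulVec (e 0 1) = -(ω • (e 1 0))
      ∧ ∀ lam : ℂ,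
          ((J.map Complex.ofReal)
            - lam • (1 : Matrix ((Fin N) ⊕ (Fin N)) ((Fin N) ⊕ (Fin N)) ℂ)).det = 0 →
          lam ≠ Complex.I * (ω : ℂ) → lam ≠ -(Complex.I * (ω : ℂ)) →
          lam.re < 0 := by
  classical
  set Ac := A.map Complex.ofReal with hAc
  have hchar0 : Ac.charpoly ≠ 0 := (Matrix.charpoly_monic Ac).ne_zero
  set S : Finset ℂ := Ac.charpoly.roots.toFinset with hS
  have hmemS : ∀ μ : ℂ, (Ac - μ • 1).det = 0 → μ ∈ S := by
    intro μ h
    have h3 : (Ac - μ • 1) = -(μ • (1 : Matrix (Fin N) (Fin N) ℂ) - Ac) := (neg_sub _ _).symm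
    rw [h3, Matrix.det_neg] at h
    have h4 : (μ • (1 : Matrix (Fin N) (Fin N) ℂ) - Ac).det = 0 := by
      rcases mul_eq_zero.mp h with h' | h'
      · exact absurd h' (pow_ne_zero _ (by norm_num))
      · exact h'
    rw [hS, Multiset.mem_toFinset, Polynomial.mem_roots hchar0, Polynomial.IsRoot,
      aux_charpoly_eval]
    exact h4
  have hrootlt : ∀ ν ∈ S, ν ≠ (ρ:ℂ) → ν.re < ρ := by
    intro ν hν hνρ
    have hroot := (Polynomial.mem_roots hchar0).mp (Multiset.mem_toFinset.mp hν)
    have he : (ν • (1 : Matrix (Fin N) (Fin N) ℂ) - Ac).det = 0 := by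
      rw [← aux_charpoly_eval]; exact hroot
    have hdet0 : (Ac - ν • 1).det = 0 := by
      rw [(neg_sub (ν • (1 : Matrix (Fin N) (Fin N) ℂ)) Ac).symm, Matrix.det_neg, he, mul_zero]
    have habs := hspec ν hdet0
    have hre : ν.re ≤ ‖ν‖ := Complex.re_le_norm ν
    rcases lt_or_eq_of_le (le_trans hre habs) with h | h
    · exact h
    · exfalso
      apply hνρ
      have hsq := Complex.sq_norm ν
      rw [Complex.normSq_apply] at hsq
      have habs2 : ‖ν‖ ^ 2 ≤ ρ ^ 2 := by
        have := norm_nonneg ν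
        nlinarith
      have him : ν.im = 0 := by nlinarith
      exact Complex.ext (by simpa using h) (by simpa using him)
  set T : Finset ℝ := (S.erase (ρ:ℂ)).image Complex.re with hT
  set d : ℝ := if h : T.Nonempty then ρ - T.max' h else ρ with hd
  have hd0 : 0 < d := by
    rw [hd]
    split_ifs with h
    · obtain ⟨ν, hν, hre⟩ := Finset.mem_image.mp (T.max'_mem h)
      have hlt := hrootlt ν (Finset.mem_of_mem_erase hν) (Finset.ne_of_mem_erase hν)
      rw [hre] at hlt
      linarith
    · exact hρ
  have hbound : ∀ ν ∈ S, ν ≠ (ρ:ℂ) → ν.re ≤ ρ - d := by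
    intro ν hν hνρ
    have hmem : ν.re ∈ T := Finset.mem_image_of_mem _ (Finset.mem_erase.mpr ⟨hνρ, hν⟩)
    have hne : T.Nonempty := ⟨_, hmem⟩
    rw [hd, dif_pos hne]
    linarith [T.le_max' _ hmem]
  refine ⟨min 1 (d * (1 - α) / ρ), lt_min one_pos (div_pos (mul_pos hd0 (by linarith)) hρ), ?_⟩
  intro ε hε hεlt
  intro ω β J e
  have hωdef : ω = Real.sqrt (ε * (1 - ε)) := rfl
  have hedef : e = fun r s => Sum.elim (fun i => r * x₀ i)
      (fun i => (ε * r + ω * s) * x₀ i) := rfl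
  have hε1 : ε < 1 := lt_of_lt_of_le hεlt (min_le_left _ _)
  have hεd : ε < d * (1 - α) / ρ := lt_of_lt_of_le hεlt (min_le_right _ _)
  have hω2 : ω ^ 2 = ε * (1 - ε) := Real.sq_sqrt (by nlinarith)
  have hβρ : β * ρ = 1 + ε - α := div_mul_cancel₀ _ (ne_of_gt hρ)
  have key : ∀ r s : ℝ, J.mulVec (e r s) = e (-(ω * s)) (ω * r) :=
    fun r s => aux_mulVec N A ρ x₀ hPerron α ε ω β hβρ hω2 r s
  refine ⟨fun r s => ⟨-(ω * s), ω * r, key r s⟩, ?_, ?_, ?_⟩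
  · rw [key 1 0]
    funext x
    cases x <;> (simp [hedef]; try ring)
  · rw [key 0 1]
    funext x
    cases x <;> (simp [hedef]; try ring)
  · intro lam hdet hne1 hne2
    by_contra hre0
    push_neg at hre0
    have h1α : (0:ℝ) < 1 + ε - α := by linarith
    have hβ0 : 0 < β := div_pos h1α hρ
    have hβC : ((β:ℝ):ℂ) ≠ 0 := Complex.ofReal_ne_zero.mpr (ne_of_gt hβ0)
    have hlamε : lam + (ε:ℂ) ≠ 0 := by
      intro h
      have := congrArg Complex.re h
      simp at this
      linarith
    have hμdet := aux_det N A α ε β hβC lam hlamε hdet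
    set μ : ℂ := ((lam + ε/(lam+ε) + (1-α)) / (β:ℂ)) with hμ
    have hμS : μ ∈ S := hmemS μ hμdet
    have habs : ‖μ‖ ≤ ρ := hspec μ hμdet
    have hnormpos : 0 < Complex.normSq (lam + (ε:ℂ)) := Complex.normSq_pos.mpr hlamε
    have hdivre : ((ε:ℂ)/(lam+(ε:ℂ))).re = ε * (lam.re + ε) / Complex.normSq (lam + (ε:ℂ)) := by
      rw [Complex.div_re]
      simp [Complex.add_re, Complex.ofReal_re, Complex.ofReal_im, Complex.add_im]
      try ring
    have hcre : 0 < (lam + (ε:ℂ)/(lam+(ε:ℂ))).re := by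
      rw [Complex.add_re, hdivre]
      have hpos : 0 < ε * (lam.re + ε) / Complex.normSq (lam + (ε:ℂ)) := by
        apply div_pos _ hnormpos
        apply mul_pos hε
        linarith
      linarith
    have hμre : (1 - α) / β < μ.re := by
      rw [hμ]
      have hre' : (lam + ε/(lam+ε) + (1-(α:ℂ))).re
          = (lam + (ε:ℂ)/(lam+(ε:ℂ))).re + (1 - α) := by
        simp [Complex.add_re, Complex.sub_re, Complex.ofReal_re, Complex.one_re]
      rw [show ((lam + ε/(lam+ε) + (1-α)) / (β:ℂ)) = (lam + ε/(lam+ε) + (1-(α:ℂ))) / ((β:ℝ):ℂ) by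
        push_cast; ring, Complex.div_ofReal_re, hre']
      exact (div_lt_div_iff_of_pos_right hβ0).mpr (by linarith)
    by_cases hμρ : μ = (ρ:ℂ)
    · -- the equation forces lam = ± I ω, contradiction
      have hc : lam + (ε:ℂ)/(lam+ε) + (1-(α:ℂ)) = ((1 + ε - α : ℝ) : ℂ) := by
        have h5 : μ * (β:ℂ) = (ρ:ℂ) * (β:ℂ) := by rw [hμρ]
        rw [hμ, div_mul_cancel₀ _ hβC] at h5
        rw [show (lam + ε/(lam+ε) + (1-(α:ℂ))) = (lam + ε/(lam+ε) + (1-α)) by push_cast; ring, h5]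
        rw [show ((ρ:ℂ) * (β:ℂ)) = ((ρ * β : ℝ) : ℂ) by push_cast; ring]
        rw [show ρ * β = β * ρ by ring, hβρ]
      have hlam2 : lam ^ 2 = (ε:ℂ)^2 - ε := by
        have h8 : (ε:ℂ)/(lam+ε) * (lam+ε) = ε := div_mul_cancel₀ _ hlamε
        have h9 := congrArg (· * (lam + (ε:ℂ))) hc
        push_cast at h9
        linear_combination h9 - h8
      have hω2C : ((ω:ℝ):ℂ)^2 = (ε:ℂ) * (1 - ε) := by
        rw [show ((ω:ℝ):ℂ)^2 = ((ω^2 : ℝ) : ℂ) by push_cast; ring, hω2]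
        push_cast
        ring
      have hfact : (lam - Complex.I * ω) * (lam + Complex.I * ω) = 0 := by
        have hI : Complex.I ^ 2 = -1 := Complex.I_sq
        linear_combination hlam2 + hω2C - ((ω:ℝ):ℂ)^2 * hI
      rcases mul_eq_zero.mp hfact with h | h
      · exact hne1 (by linear_combination h)
      · exact hne2 (by linear_combination h)
    · have h1 := hbound μ hμS hμρ
      -- contradiction: (1-α)/β < μ.re ≤ ρ - d, but (1-α)/β ≥ ρ - d
      have hμβ : (1 - α) < μ.re * β := (div_lt_iff₀ hβ0).mp hμre
      have h2 : μ.re * β ≤ (ρ - d) * β :=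
        mul_le_mul_of_nonneg_right h1 (le_of_lt hβ0)
      have hdβ : ε < d * β := by
        have h6 : ε * ρ < d * (1 - α) := (lt_div_iff₀ hρ).mp hεd
        have h7 : d * (1 - α) ≤ d * (β * ρ) - d * ε * ρ := by
          rw [hβρ]; nlinarith
        nlinarith
      nlinarith
end

section
/- Let μ ∈ ℂ with Re(μ) ≥ 0 and α < 1, and consider the quadratic λ² + (μ + 1 + ε - α)λ + ε(μ + 2 - α) = 0 in λ. At ε = 0 the roots are λ = 0 and λ = α - 1 - μ (which has negative real part). Moreover, writing the root branch λ(ε) with λ(0) = 0, one has dRe(λ)/dε |_{ε=0} = -Re((2 - α + μ)/(1 - α + μ)) < 0; hence the zero root moves into the open left half-plane for small ε > 0. -/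
open Complex

/-- Perturbation of the zero root: for `Re μ ≥ 0`, `α < 1`, at `ε = 0` the
roots of `λ² + (μ+1+ε-α)λ + ε(μ+2-α) = 0` are `0` and `α-1-μ` (the latter with
negative real part), and along any differentiable root branch `λ(ε)` with
`λ(0) = 0` one has `d Re λ / d ε |₀ = -Re((2-α+μ)/(1-α+μ)) < 0`. -/
theorem stmt_18 (μ : ℂ) (hμ : 0 ≤ μ.re) (α : ℝ) (hα : α < 1) :
    (∀ lam : ℂ,
      lam ^ 2 + (μ + 1 + (0 : ℂ) - (α : ℂ)) * lam + (0 : ℂ) * (μ + 2 - (α : ℂ)) = 0 ↔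
        (lam = 0 ∨ lam = (α : ℂ) - 1 - μ))
    ∧ ((α : ℂ) - 1 - μ).re < 0
    ∧ (-(((2 - (α : ℂ) + μ) / (1 - (α : ℂ) + μ)).re) < 0)
    ∧ ∀ lam : ℝ → ℂ,
        (∀ ε : ℝ, (lam ε) ^ 2 + (μ + 1 + (ε : ℂ) - (α : ℂ)) * (lam ε)
            + (ε : ℂ) * (μ + 2 - (α : ℂ)) = 0) →
        lam 0 = 0 → DifferentiableAt ℝ lam 0 →
        HasDerivAt (fun ε : ℝ => (lam ε).re)
          (-(((2 - (α : ℂ) + μ) / (1 - (α : ℂ) + μ)).re)) 0 := by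
  have hden : ((1 : ℂ) - (α : ℂ) + μ) ≠ 0 := by
    intro h
    have := congrArg Complex.re h
    simp at this
    linarith
  have hkey : 0 < (((2 - (α : ℂ) + μ) / (1 - (α : ℂ) + μ)).re) := by
    rw [Complex.div_re, ← add_div]
    apply div_pos
    · have h1 : ((2 : ℂ) - (α : ℂ) + μ).re = 2 - α + μ.re := by simp
      have h2 : ((1 : ℂ) - (α : ℂ) + μ).re = 1 - α + μ.re := by simp
      have h3 : ((2 : ℂ) - (α : ℂ) + μ).im = μ.im := by simp
      have h4 : ((1 : ℂ) - (α : ℂ) + μ).im = μ.im := by simp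
      rw [h1, h2, h3, h4]
      nlinarith [sq_nonneg μ.im]
    · rwa [Complex.normSq_pos]
  refine ⟨?_, ?_, by linarith, ?_⟩
  · intro lam
    constructor
    · intro h
      have h' : lam * (lam + (μ + 1 - (α : ℂ))) = 0 := by linear_combination h
      rcases mul_eq_zero.mp h' with h0 | h1
      · exact Or.inl h0
      · right; linear_combination h1
    · rintro (rfl | rfl) <;> ring
  · simp only [Complex.sub_re, Complex.ofReal_re, Complex.one_re]
    linarith
  · intro lam heq h0 hdiff
    have hlam : HasDerivAt lam (deriv lam 0) 0 := hdiff.hasDerivAt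
    set d := deriv lam 0 with hd
    have hof : HasDerivAt (fun ε : ℝ => (ε : ℂ)) 1 0 := by
      simpa using (hasDerivAt_id (0 : ℝ)).ofReal_comp
    have hF : HasDerivAt (fun ε : ℝ => (lam ε) * (lam ε) + (μ + 1 + (ε : ℂ) - (α : ℂ)) * (lam ε)
          + (ε : ℂ) * (μ + 2 - (α : ℂ)))
        (d * lam 0 + lam 0 * d + (1 * lam 0 + (μ + 1 + ((0 : ℝ) : ℂ) - (α : ℂ)) * d)
          + 1 * (μ + 2 - (α : ℂ))) 0 := by
      exact ((hlam.mul hlam).add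
        ((((hof.const_add (μ + 1)).sub_const (α : ℂ)).mul hlam))).add
        (hof.mul_const (μ + 2 - (α : ℂ)))
    have hF0 : HasDerivAt (fun ε : ℝ => (lam ε) * (lam ε) + (μ + 1 + (ε : ℂ) - (α : ℂ)) * (lam ε)
          + (ε : ℂ) * (μ + 2 - (α : ℂ))) 0 0 := by
      have : (fun ε : ℝ => (lam ε) * (lam ε) + (μ + 1 + (ε : ℂ) - (α : ℂ)) * (lam ε)
          + (ε : ℂ) * (μ + 2 - (α : ℂ))) = fun _ => (0 : ℂ) := by
        funext ε
        linear_combination heq ε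
      rw [this]
      exact hasDerivAt_const 0 0
    have hDeq := hF.unique hF0
    rw [h0] at hDeq
    have hdval : d = -((2 - (α : ℂ) + μ) / (1 - (α : ℂ) + μ)) := by
      have hDeq' : ((1 : ℂ) - (α : ℂ) + μ) * d + (2 - (α : ℂ) + μ) = 0 := by
        push_cast at hDeq
        linear_combination hDeq
      field_simp
      linear_combination hDeq'
    have hre : HasDerivAt (fun ε : ℝ => (lam ε).re) d.re 0 :=
      Complex.reCLM.hasFDerivAt.comp_hasDerivAt 0 hlam
    have : d.re = -(((2 - (α : ℂ) + μ) / (1 - (α : ℂ) + μ)).re) := by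
      rw [hdval]; simp
    rwa [this] at hre
end
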